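/- arXiv:0909.2120 — 2 statements merged into one kernel-verified Lean document; each statement's English description precedes it below -/
import Mathlib

section
/- For every integer d ≥ 2 and every x ∈ [0,1], there exists a sequence of probability measures μ^N ∈ M(d,N) such that lim_{N→∞} H(μ^N)/(N log d) = x and lim_{N→∞} I(μ^N)/(N log d) = x(1 − x), where I is the neural complexity. -/
open Filter

noncomputable def entropy {α : Type*} [Fintype α] (p : α → ℝ) : ℝ :=
  -∑ x, p x * Real.log (p x)

def IsPMF {α : Type*} [Fintype α] (p : α → ℝ) : Prop :=
  (∀ x, 0 ≤ p x) ∧ ∑ x, p x = 1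

noncomputable def margin {d N : ℕ} (μ : (Fin N → Fin d) → ℝ) (S : Finset (Fin N)) :
    (({ i // i ∈ S }) → Fin d) → ℝ :=
  fun y => ∑ x : Fin N → Fin d, if ∀ i : { i // i ∈ S }, x i.1 = y i then μ x else 0

/-- Mutual information between `X_S` and `X_{Sᶜ}`. -/
noncomputable def MIS {d N : ℕ} (μ : (Fin N → Fin d) → ℝ) (S : Finset (Fin N)) : ℝ :=
  entropy (margin μ S) + entropy (margin μ Sᶜ) - entropy μ

/-- The Edelman–Sporns–Tononi neural complexity. -/
noncomputable def neural {d N : ℕ} (μ : (Fin N → Fin d) → ℝ) : ℝ :=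
  (1 / (N + 1 : ℝ)) * ∑ S : Finset (Fin N), (1 / (N.choose S.card : ℝ)) * MIS μ S

noncomputable def avgEntropy {d N : ℕ} (μ : (Fin N → Fin d) → ℝ) (k : ℕ) : ℝ :=
  (1 / (N.choose k : ℝ)) *
    ∑ S ∈ Finset.powersetCard k (Finset.univ : Finset (Fin N)), entropy (margin μ S)

/-- The entropy profile `h_X : [0,1] → [0,1]`, piecewise affine interpolation of
`k/N ↦ (average entropy of subsystems of size k)/(N log d)`. -/
noncomputable def profile {d N : ℕ} (μ : (Fin N → Fin d) → ℝ) (t : ℝ) : ℝ :=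
  if t ≤ 0 then 0 else
    (avgEntropy μ (⌈t * N⌉.toNat - 1)
      + (t * N - ((⌈t * N⌉.toNat - 1 : ℕ) : ℝ)) *
        (avgEntropy μ ⌈t * N⌉.toNat - avgEntropy μ (⌈t * N⌉.toNat - 1)))
      / (N * Real.log d)

set_option linter.unusedSectionVars false
set_option maxHeartbeats 1000000

open Finset Real


def cnt {n : ℕ} {γ : Type*} [DecidableEq γ] (v : Fin n → γ) (y : γ) : ℕ :=
  (Finset.univ.filter fun j => v j = y).card

noncomputable def emp {n : ℕ} {γ : Type*} [Fintype γ] [DecidableEq γ] (v : Fin n → γ) :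
    γ → ℝ := fun y => (cnt v y : ℝ) / n

noncomputable def Lam {n : ℕ} {γ : Type*} [Fintype γ] [DecidableEq γ] (v : Fin n → γ) : ℝ :=
  ∑ y, (cnt v y : ℝ) * Real.log (cnt v y)

def pr {d N : ℕ} (S : Finset (Fin N)) (x : Fin N → Fin d) : {i // i ∈ S} → Fin d :=
  fun i => x i.1

lemma weighted_log_le {ι : Type*} (t : Finset ι) (p r : ι → ℝ)
    (hp : ∀ i ∈ t, 0 ≤ p i) (hs : ∑ i ∈ t, p i = 1)
    (hr : ∀ i ∈ t, 0 ≤ r i) (hpr : ∀ i ∈ t, p i ≠ 0 → r i ≠ 0) :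
    ∑ i ∈ t, p i * Real.log (r i) ≤ Real.log (∑ i ∈ t, p i * r i) := by
  set R := ∑ i ∈ t, p i * r i with hRdef
  have hex : ∃ i ∈ t, 0 < p i := by
    by_contra h
    push_neg at h
    have : ∑ i ∈ t, p i = 0 :=
      Finset.sum_eq_zero fun i hi => le_antisymm (h i hi) (hp i hi)
    rw [this] at hs; norm_num at hs
  obtain ⟨i0, hi0, hp0⟩ := hex
  have hR0 : 0 < R := by
    refine Finset.sum_pos' (fun i hi => mul_nonneg (hp i hi) (hr i hi)) ⟨i0, hi0, ?_⟩
    have hr0 : 0 < r i0 := lt_of_le_of_ne (hr i0 hi0) (Ne.symm (hpr i0 hi0 hp0.ne'))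
    exact mul_pos hp0 hr0
  have key : ∀ i ∈ t, p i * Real.log (r i) ≤ p i * r i / R - p i + p i * Real.log R := by
    intro i hi
    rcases eq_or_lt_of_le (hp i hi) with h0 | h0
    · simp [← h0]
    · have hri : 0 < r i := lt_of_le_of_ne (hr i hi) (Ne.symm (hpr i hi h0.ne'))
      have hlog : Real.log (r i) - Real.log R ≤ r i / R - 1 := by
        have := Real.log_le_sub_one_of_pos (div_pos hri hR0)
        rwa [Real.log_div hri.ne' hR0.ne'] at this
      have := mul_le_mul_of_nonneg_left hlog h0.le
      have h2 : p i * (r i / R - 1) = p i * r i / R - p i := by ring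
      nlinarith
  calc ∑ i ∈ t, p i * Real.log (r i)
      ≤ ∑ i ∈ t, (p i * r i / R - p i + p i * Real.log R) := Finset.sum_le_sum key
    _ = R / R - 1 + Real.log R := by
        rw [Finset.sum_add_distrib, Finset.sum_sub_distrib, ← Finset.sum_div, ← hRdef, hs,
          ← Finset.sum_mul, hs, one_mul]
    _ = Real.log R := by rw [div_self hR0.ne']; ring

variable {n : ℕ} {γ : Type*} [Fintype γ] [DecidableEq γ]

lemma cnt_eq_sum' (v : Fin n → γ) (y : γ) :
    (cnt v y : ℝ) = ∑ j, if v j = y then (1:ℝ) else 0 := by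
  rw [cnt, Finset.card_filter]; push_cast; rfl

lemma sum_cnt' (v : Fin n → γ) : ∑ y, (cnt v y : ℝ) = n := by
  simp_rw [cnt_eq_sum']
  rw [Finset.sum_comm]
  simp

lemma isPMF_emp (hn : 0 < n) (v : Fin n → γ) : IsPMF (emp v) := by
  constructor
  · intro y; exact div_nonneg (Nat.cast_nonneg _) (Nat.cast_nonneg _)
  · unfold emp
    rw [← Finset.sum_div, sum_cnt', div_self]
    exact_mod_cast hn.ne'

lemma entropy_emp (hn : 0 < n) (v : Fin n → γ) :
    entropy (emp v) = Real.log n - Lam v / n := by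
  have hn' : (0:ℝ) < n := by exact_mod_cast hn
  have : ∀ y : γ, emp v y * Real.log (emp v y)
      = (cnt v y : ℝ) * Real.log (cnt v y) / n - (cnt v y : ℝ) / n * Real.log n := by
    intro y
    rcases Nat.eq_zero_or_pos (cnt v y) with h | h
    · simp [emp, h]
    · have hc : (0:ℝ) < cnt v y := by exact_mod_cast h
      rw [emp, Real.log_div hc.ne' hn'.ne']
      ring
  rw [entropy]
  rw [Finset.sum_congr rfl fun y _ => this y]
  rw [Finset.sum_sub_distrib, ← Finset.sum_div, ← Finset.sum_mul, ← Finset.sum_div, sum_cnt',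
    div_self hn'.ne', one_mul]
  rw [← Lam]
  ring

lemma Lam_nonneg (v : Fin n → γ) : 0 ≤ Lam v := by
  refine Finset.sum_nonneg fun y _ => ?_
  rcases Nat.eq_zero_or_pos (cnt v y) with h | h
  · simp [h]
  · have h1 : (1:ℝ) ≤ cnt v y := by exact_mod_cast h
    exact mul_nonneg (by linarith) (Real.log_nonneg h1)

lemma Lam_ge (hn : 0 < n) (v : Fin n → γ) :
    (n : ℝ) * (Real.log n - Real.log (Fintype.card γ)) ≤ Lam v := by
  have hγ : Nonempty γ := ⟨v ⟨0, hn⟩⟩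
  have hB : (0:ℝ) < Fintype.card γ := by exact_mod_cast Fintype.card_pos
  have hn' : (0:ℝ) < n := by exact_mod_cast hn
  set q : ℝ := n / Fintype.card γ with hq
  have hq0 : 0 < q := div_pos hn' hB
  have key : ∀ y : γ, (cnt v y : ℝ) * Real.log q - (cnt v y : ℝ) * Real.log (cnt v y)
      ≤ q - cnt v y := by
    intro y
    rcases Nat.eq_zero_or_pos (cnt v y) with h | h
    · simp [h]; positivity
    · have hc : (0:ℝ) < cnt v y := by exact_mod_cast h
      have hlog : Real.log q - Real.log (cnt v y) ≤ q / cnt v y - 1 := by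
        have := Real.log_le_sub_one_of_pos (div_pos hq0 hc)
        rwa [Real.log_div hq0.ne' hc.ne'] at this
      have := mul_le_mul_of_nonneg_left hlog hc.le
      have h2 : (cnt v y : ℝ) * (q / cnt v y - 1) = q - cnt v y := by
        field_simp
      nlinarith
  have h1 : ∑ y, ((cnt v y : ℝ) * Real.log q - (cnt v y : ℝ) * Real.log (cnt v y))
      ≤ ∑ y, (q - (cnt v y : ℝ)) := Finset.sum_le_sum fun y _ => key y
  have h2 : ∑ y, ((cnt v y : ℝ) * Real.log q - (cnt v y : ℝ) * Real.log (cnt v y))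
      = (n:ℝ) * Real.log q - Lam v := by
    rw [Finset.sum_sub_distrib, ← Finset.sum_mul, sum_cnt', Lam]
  have h3 : ∑ y, (q - (cnt v y : ℝ)) = 0 := by
    rw [Finset.sum_sub_distrib, sum_cnt', Finset.sum_const, Finset.card_univ, nsmul_eq_mul, hq]
    field_simp
    ring
  have hlogq : Real.log q = Real.log n - Real.log (Fintype.card γ) :=
    Real.log_div hn'.ne' hB.ne'
  rw [h2, h3] at h1
  rw [hlogq] at h1
  nlinarith

lemma Lam_le_log (hn : 0 < n) (v : Fin n → γ) :
    Lam v / n ≤ Real.log ((∑ y, (cnt v y : ℝ) ^ 2) / n) := by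
  have hn' : (0:ℝ) < n := by exact_mod_cast hn
  have h := weighted_log_le Finset.univ (fun y => (cnt v y : ℝ) / n) (fun y => (cnt v y : ℝ))
    (fun y _ => div_nonneg (Nat.cast_nonneg _) hn'.le)
    (by rw [← Finset.sum_div, sum_cnt', div_self hn'.ne'])
    (fun y _ => Nat.cast_nonneg _)
    (fun y _ hy hc => hy (by rw [hc, zero_div]))
  have hl : ∑ y, (cnt v y : ℝ) / n * Real.log (cnt v y) = Lam v / n := by
    rw [Lam, Finset.sum_div]
    exact Finset.sum_congr rfl fun y _ => by ring
  have hr : ∑ y, (cnt v y : ℝ) / n * (cnt v y : ℝ) = (∑ y, (cnt v y : ℝ) ^ 2) / n := by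
    rw [Finset.sum_div]
    exact Finset.sum_congr rfl fun y _ => by ring
  rwa [hl, hr] at h

section Count

variable {ι Ω : Type*} [Fintype ι] [DecidableEq ι] [Fintype Ω]

lemma sum_fun_apply (j : ι) (g : Ω → ℝ) :
    ∑ a : ι → Ω, g (a j) = (Fintype.card Ω : ℝ) ^ (Fintype.card ι - 1) * ∑ u, g u := by
  classical
  have h1 : ∑ a : ι → Ω, g (a j) = ∑ p : Ω × ({i // i ≠ j} → Ω), g p.1 :=
    Fintype.sum_equiv (Equiv.funSplitAt j Ω) _ _ (fun a => rfl)
  have hcard : Fintype.card ({i // i ≠ j} → Ω) = Fintype.card Ω ^ (Fintype.card ι - 1) := by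
    rw [Fintype.card_fun]
    congr 1
    rw [Fintype.card_subtype_compl, Fintype.card_subtype_eq]
  rw [h1, Fintype.sum_prod_type]
  simp only [Finset.sum_const, Finset.card_univ, hcard, nsmul_eq_mul]
  rw [← Finset.mul_sum]
  push_cast
  ring
end Count

section Count2
variable {ι Ω : Type*} [Fintype ι] [DecidableEq ι] [Fintype Ω]

lemma sum_fun_apply₂ {j j' : ι} (hjj : j ≠ j') (g h : Ω → ℝ) :
    ∑ a : ι → Ω, g (a j) * h (a j')
      = (Fintype.card Ω : ℝ) ^ (Fintype.card ι - 2) * ((∑ u, g u) * (∑ u, h u)) := by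
  classical
  have h1 : ∑ a : ι → Ω, g (a j) * h (a j')
      = ∑ p : Ω × ({i // i ≠ j} → Ω), g p.1 * h (p.2 ⟨j', hjj.symm⟩) :=
    Fintype.sum_equiv (Equiv.funSplitAt j Ω) _ _ (fun a => rfl)
  rw [h1, Fintype.sum_prod_type]
  simp only [← Finset.mul_sum]
  have h2 : ∑ w : {i // i ≠ j} → Ω, h (w ⟨j', hjj.symm⟩)
      = (Fintype.card Ω : ℝ) ^ (Fintype.card {i // i ≠ j} - 1) * ∑ u, h u :=
    sum_fun_apply _ h
  have hc : Fintype.card {i // i ≠ j} = Fintype.card ι - 1 := by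
    rw [Fintype.card_subtype_compl, Fintype.card_subtype_eq]
  rw [h2, hc, ← Finset.sum_mul]
  have : Fintype.card ι - 1 - 1 = Fintype.card ι - 2 := by omega
  rw [this]
  ring

lemma sum_sq_cnt_eq_pairs {n : ℕ} {γ : Type*} [Fintype γ] [DecidableEq γ] (v : Fin n → γ) :
    ∑ y, (cnt v y : ℝ) ^ 2 = ∑ j, ∑ j', (if v j = v j' then (1:ℝ) else 0) := by
  classical
  simp_rw [cnt_eq_sum', sq, Finset.sum_mul_sum]
  rw [Finset.sum_comm]
  refine Finset.sum_congr rfl fun j _ => ?_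
  rw [Finset.sum_comm]
  refine Finset.sum_congr rfl fun j' _ => ?_
  have key : ∀ y, (if v j = y then (1:ℝ) else 0) * (if v j' = y then 1 else 0)
      = if v j' = y then (if v j = y then (1:ℝ) else 0) else 0 := by
    intro y; by_cases h2 : v j' = y <;> simp [h2]
  simp_rw [key]
  rw [Finset.sum_ite_eq]
  simp

lemma sum_fun_apply₂' {ι Ω : Type*} [Fintype ι] [DecidableEq ι] [Fintype Ω]
    {j j' : ι} (hjj : j ≠ j') (F : Ω → Ω → ℝ) :
    ∑ a : ι → Ω, F (a j) (a j')
      = (Fintype.card Ω : ℝ) ^ (Fintype.card ι - 2) * ∑ u, ∑ v, F u v := by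
  classical
  have h1 : ∑ a : ι → Ω, F (a j) (a j')
      = ∑ p : Ω × ({i // i ≠ j} → Ω), F p.1 (p.2 ⟨j', hjj.symm⟩) :=
    Fintype.sum_equiv (Equiv.funSplitAt j Ω) _ _ (fun a => rfl)
  rw [h1, Fintype.sum_prod_type]
  have h2 : ∀ u, ∑ w : {i // i ≠ j} → Ω, F u (w ⟨j', hjj.symm⟩)
      = (Fintype.card Ω : ℝ) ^ (Fintype.card {i // i ≠ j} - 1) * ∑ v, F u v :=
    fun u => sum_fun_apply _ (F u)
  have hc : Fintype.card {i // i ≠ j} = Fintype.card ι - 1 := by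
    rw [Fintype.card_subtype_compl, Fintype.card_subtype_eq]
  have he : Fintype.card ι - 1 - 1 = Fintype.card ι - 2 := by omega
  simp_rw [h2, hc, he]
  rw [← Finset.mul_sum]

lemma exp_sum_sq {Ω γ : Type*} [Fintype Ω] [Fintype γ] [DecidableEq γ]
    (n : ℕ) (pj : Ω → γ) (K : ℕ)
    (hreg : ∀ y, (Finset.univ.filter fun x => pj x = y).card = K) :
    ∑ a : Fin n → Ω, ∑ y, (cnt (fun j => pj (a j)) y : ℝ) ^ 2
      = (n : ℝ) * (Fintype.card Ω : ℝ) ^ n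
        + (n : ℝ) * ((n : ℝ) - 1) * (Fintype.card Ω : ℝ) ^ (n - 1) * K := by
  classical
  set W := (Fintype.card Ω : ℝ) with hW
  have key : ∀ j j' : Fin n, ∑ a : Fin n → Ω,
      (if pj (a j) = pj (a j') then (1:ℝ) else 0)
      = if j = j' then W ^ n else W ^ (n - 1) * K := by
    intro j j'
    by_cases hjj : j = j'
    · subst hjj
      simp only [if_true]
      rw [Finset.sum_const, Finset.card_univ, Fintype.card_fun, Fintype.card_fin,
        nsmul_eq_mul, mul_one]
      push_cast [hW]
      ring
    · rw [if_neg hjj]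
      have hn2 : 2 ≤ n := by
        have h1 := j.isLt; have h2 := j'.isLt
        have : (j : ℕ) ≠ (j' : ℕ) := fun h => hjj (Fin.ext h)
        omega
      have := sum_fun_apply₂' hjj (fun u v => if pj u = pj v then (1:ℝ) else 0)
      rw [this, Fintype.card_fin]
      have hin : ∀ u : Ω, ∑ v, (if pj u = pj v then (1:ℝ) else 0) = (K : ℝ) := by
        intro u
        have : ∑ v, (if pj u = pj v then (1:ℝ) else 0)
            = ∑ v, (if pj v = pj u then (1:ℝ) else 0) := by
          refine Finset.sum_congr rfl fun v _ => ?_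
          by_cases h : pj u = pj v
          · rw [if_pos h, if_pos h.symm]
          · rw [if_neg h, if_neg (fun hh => h (Eq.symm hh))]
        rw [this]
        have h2 := hreg (pj u)
        rw [Finset.card_filter] at h2
        exact_mod_cast h2
      simp_rw [hin]
      rw [Finset.sum_const, Finset.card_univ, nsmul_eq_mul]
      have hpow : W ^ (n - 2) * W = W ^ (n - 1) := by
        have : n - 1 = (n - 2) + 1 := by omega
        rw [this, pow_succ]
      rw [← hpow, hW]
      ring
  have h0 : ∑ a : Fin n → Ω, ∑ y, (cnt (fun j => pj (a j)) y : ℝ) ^ 2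
      = ∑ j : Fin n, ∑ j' : Fin n, ∑ a : Fin n → Ω,
          (if pj (a j) = pj (a j') then (1:ℝ) else 0) := by
    simp_rw [sum_sq_cnt_eq_pairs]
    rw [Finset.sum_comm]
    exact Finset.sum_congr rfl fun j _ => Finset.sum_comm
  rw [h0]
  simp_rw [key]
  have hrow : ∀ j : Fin n, ∑ j' : Fin n, (if j = j' then W ^ n else W ^ (n - 1) * K)
      = W ^ n + ((n : ℝ) - 1) * (W ^ (n - 1) * K) := by
    intro j
    have hsplit : ∀ j' : Fin n, (if j = j' then W ^ n else W ^ (n - 1) * K)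
        = W ^ (n - 1) * K + (if j = j' then W ^ n - W ^ (n - 1) * K else 0) := by
      intro j'; by_cases h : j = j' <;> simp [h]
    simp_rw [hsplit]
    rw [Finset.sum_add_distrib, Finset.sum_const, Finset.card_univ, Fintype.card_fin,
      nsmul_eq_mul, Finset.sum_ite_eq, if_pos (Finset.mem_univ j)]
    have hn : 1 ≤ n := by
      have := j.isLt; omega
    have : (n : ℝ) ≥ 1 := by exact_mod_cast hn
    ring
  simp_rw [hrow]
  rw [Finset.sum_const, Finset.card_univ, Fintype.card_fin, nsmul_eq_mul]
  ring

lemma card_fiber {d N : ℕ} (S : Finset (Fin N)) (y : {i // i ∈ S} → Fin d) :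
    (Finset.univ.filter fun x : Fin N → Fin d => pr S x = y).card = d ^ (N - S.card) := by
  classical
  rw [← Fintype.card_subtype]
  have e : {x : Fin N → Fin d // pr S x = y} ≃ ({i : Fin N // i ∉ S} → Fin d) :=
    { toFun := fun x i => x.1 i.1
      invFun := fun g =>
        ⟨fun i => if h : i ∈ S then y ⟨i, h⟩ else g ⟨i, h⟩, by
          funext i
          exact dif_pos i.2⟩
      left_inv := by
        intro x
        apply Subtype.ext
        funext i
        show (if h : i ∈ S then y ⟨i, h⟩ else x.1 i) = x.1 i
        by_cases h : i ∈ S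
        · rw [dif_pos h]
          exact (congrFun x.2 ⟨i, h⟩).symm
        · rw [dif_neg h]
      right_inv := by
        intro g
        funext i
        show (if h : i.1 ∈ S then y ⟨i.1, h⟩ else g ⟨i.1, _⟩) = g i
        rw [dif_neg i.2] }
  rw [Fintype.card_congr e, Fintype.card_fun]
  congr 1
  · rw [Fintype.card_fin]
  · rw [Fintype.card_subtype_compl, Fintype.card_fin, Fintype.card_coe]

lemma margin_emp {d N n : ℕ} (v : Fin n → (Fin N → Fin d)) (S : Finset (Fin N)) :
    margin (emp v) S = emp (fun j => pr S (v j)) := by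
  classical
  funext y
  have hiff : ∀ x : Fin N → Fin d,
      (∀ i : { i // i ∈ S }, x i.1 = y i) ↔ pr S x = y := by
    intro x
    constructor
    · intro h; funext i; exact h i
    · intro h i; exact congrFun h i
  have h0 : margin (emp v) S y
      = ∑ x : Fin N → Fin d, if pr S x = y then (cnt v x : ℝ) / n else 0 := by
    rw [margin]
    exact Finset.sum_congr rfl fun x _ => if_congr (hiff x) rfl rfl
  have h1 : (cnt (fun j => pr S (v j)) y : ℝ)
      = ∑ x : Fin N → Fin d, if pr S x = y then (cnt v x : ℝ) else 0 := by
    rw [cnt_eq_sum']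
    have hj : ∀ j : Fin n, (if pr S (v j) = y then (1:ℝ) else 0)
        = ∑ x : Fin N → Fin d, if v j = x then (if pr S x = y then (1:ℝ) else 0) else 0 := by
      intro j
      rw [Finset.sum_ite_eq, if_pos (Finset.mem_univ _)]
    simp_rw [hj]
    rw [Finset.sum_comm]
    refine Finset.sum_congr rfl fun x _ => ?_
    have : ∀ j : Fin n, (if v j = x then (if pr S x = y then (1:ℝ) else 0) else 0)
        = (if pr S x = y then (1:ℝ) else 0) * (if v j = x then (1:ℝ) else 0) := by
      intro j; by_cases h : v j = x <;> simp [h]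
    simp_rw [this]
    rw [← Finset.mul_sum, ← cnt_eq_sum']
    by_cases h : pr S x = y <;> simp [h]
  rw [h0, emp, h1, Finset.sum_div]
  refine Finset.sum_congr rfl fun x _ => ?_
  by_cases h : pr S x = y <;> simp [h]

lemma sum_by_card {N : ℕ} (g : Finset (Fin N) → ℝ) :
    ∑ S : Finset (Fin N), g S
      = ∑ k ∈ Finset.range (N + 1), ∑ S ∈ Finset.powersetCard k Finset.univ, g S := by
  have h : (Finset.univ : Finset (Finset (Fin N)))
      = (Finset.univ : Finset (Fin N)).powerset := Finset.powerset_univ.symm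
  rw [h, Finset.sum_powerset, Finset.card_univ,
    Fintype.card_fin]

lemma sum_choose_weight {N : ℕ} (f : ℕ → ℝ) :
    ∑ S : Finset (Fin N), (1 / (N.choose S.card : ℝ)) * f S.card
      = ∑ k ∈ Finset.range (N + 1), f k := by
  rw [sum_by_card]
  refine Finset.sum_congr rfl fun k hk => ?_
  have hk' : k ≤ N := by rw [Finset.mem_range] at hk; omega
  have h1 : ∀ S ∈ Finset.powersetCard k (Finset.univ : Finset (Fin N)),
      (1 / (N.choose S.card : ℝ)) * f S.card = (1 / (N.choose k : ℝ)) * f k := by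
    intro S hS
    rw [(Finset.mem_powersetCard.mp hS).2]
  rw [Finset.sum_congr rfl h1, Finset.sum_const, Finset.card_powersetCard, Finset.card_univ,
    Fintype.card_fin, nsmul_eq_mul]
  have h2 : (N.choose k : ℝ) ≠ 0 := Nat.cast_ne_zero.mpr (Nat.choose_pos hk').ne'
  field_simp

lemma gauss_sum (N m : ℕ) (hm : m ≤ N) :
    ∑ k ∈ Finset.range (N + 1), ((m - k : ℕ) : ℝ) = m * (m + 1) / 2 := by
  have h1 : ∑ k ∈ Finset.range (m + 1), (m - k : ℕ)
      = ∑ k ∈ Finset.range (N + 1), (m - k : ℕ) := by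
    refine Finset.sum_subset ?_ ?_
    · exact Finset.range_subset_range.mpr (by omega)
    · intro k _ hk
      rw [Finset.mem_range] at hk
      omega
  have h2 : ∑ k ∈ Finset.range (m + 1), (m - k : ℕ) = ∑ k ∈ Finset.range (m + 1), k := by
    have := Finset.sum_range_reflect (fun k => k) (m + 1)
    simpa using this
  have h3 := Finset.sum_range_id_mul_two (m + 1)
  have h4 : ((∑ k ∈ Finset.range (N + 1), (m - k : ℕ) : ℕ) : ℝ)
      = ∑ k ∈ Finset.range (N + 1), ((m - k : ℕ) : ℝ) := by push_cast; rfl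
  rw [← h4, ← h1, h2]
  have h5 := congrArg (Nat.cast : ℕ → ℝ) h3
  push_cast at h5 ⊢
  linarith

lemma reflect_sum (N m : ℕ) :
    ∑ k ∈ Finset.range (N + 1), ((m - (N - k) : ℕ) : ℝ)
      = ∑ k ∈ Finset.range (N + 1), ((m - k : ℕ) : ℝ) := by
  have := Finset.sum_range_reflect (fun k => ((m - k : ℕ) : ℝ)) (N + 1)
  rw [← this]
  refine Finset.sum_congr rfl fun k hk => ?_
  rw [Finset.mem_range] at hk
  congr 2



lemma Lam_div_ge {γ : Type*} [Fintype γ] [DecidableEq γ] (d m k : ℕ) (hd : 2 ≤ d)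
    (hγ : Fintype.card γ = d ^ k) (v : Fin (d ^ m) → γ) :
    ((m - k : ℕ) : ℝ) * Real.log d ≤ Lam v / ((d ^ m : ℕ) : ℝ) := by
  have hd0 : 0 < d := by omega
  have hn : 0 < d ^ m := pow_pos hd0 m
  have hn' : (0:ℝ) < ((d ^ m : ℕ) : ℝ) := by exact_mod_cast hn
  by_cases hkm : k ≤ m
  · have h := Lam_ge hn v
    rw [hγ] at h
    have hlogs : Real.log ((d ^ m : ℕ) : ℝ) - Real.log ((d ^ k : ℕ) : ℝ)
        = ((m - k : ℕ) : ℝ) * Real.log d := by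
      push_cast
      rw [Real.log_pow, Real.log_pow, Nat.cast_sub hkm]
      ring
    rw [hlogs] at h
    rw [le_div_iff₀ hn']
    linarith
  · have h0 : m - k = 0 := by omega
    rw [h0]
    simp only [Nat.cast_zero, zero_mul]
    exact div_nonneg (Lam_nonneg v) hn'.le

lemma avg_Lam_le {N d : ℕ} (hd : 2 ≤ d) (m k : ℕ) (hk : k ≤ N)
    {γ : Type*} [Fintype γ] [DecidableEq γ] (hγ : Fintype.card γ = d ^ k)
    (pj : (Fin N → Fin d) → γ)
    (hreg : ∀ y, (Finset.univ.filter fun x => pj x = y).card = d ^ (N - k)) :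
    ∑ a : Fin (d ^ m) → (Fin N → Fin d), Lam (fun j => pj (a j)) / ((d ^ m : ℕ) : ℝ)
      ≤ (Fintype.card (Fin (d ^ m) → (Fin N → Fin d)) : ℝ)
        * (Real.log 2 + ((m - k : ℕ) : ℝ) * Real.log d) := by
  classical
  have hd0 : 0 < d := by omega
  have hn : 0 < d ^ m := pow_pos hd0 m
  have hn' : (0:ℝ) < ((d ^ m : ℕ) : ℝ) := by exact_mod_cast hn
  have hΩne : Nonempty (Fin N → Fin d) := ⟨fun _ => ⟨0, hd0⟩⟩
  set W := Fintype.card (Fin N → Fin d) with hWdef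
  have hWcard : W = d ^ N := by rw [hWdef, Fintype.card_fun, Fintype.card_fin, Fintype.card_fin]
  have hW0 : 0 < W := by rw [hWcard]; exact pow_pos hd0 N
  have hW' : (0:ℝ) < (W:ℝ) := by exact_mod_cast hW0
  set M := Fintype.card (Fin (d ^ m) → (Fin N → Fin d)) with hMdef
  have hMcard : M = W ^ (d ^ m) := by rw [hMdef, Fintype.card_fun, Fintype.card_fin]
  have hM0 : 0 < M := by rw [hMcard]; exact pow_pos hW0 _
  have hM' : (0:ℝ) < (M:ℝ) := by exact_mod_cast hM0
  set F : (Fin (d ^ m) → (Fin N → Fin d)) → ℝ :=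
    fun a => (∑ y, (cnt (fun j => pj (a j)) y : ℝ) ^ 2) / ((d ^ m : ℕ) : ℝ) with hFdef
  have hFpos : ∀ a, 0 < F a := by
    intro a
    have hj0 : (0:ℝ) < ((d ^ m : ℕ) : ℝ) := hn'
    refine div_pos ?_ hj0
    set v := fun j => pj (a j) with hv
    have hc : 0 < cnt v (v ⟨0, hn⟩) := by
      rw [cnt]
      exact Finset.card_pos.mpr ⟨⟨0, hn⟩, Finset.mem_filter.mpr ⟨Finset.mem_univ _, rfl⟩⟩
    have hc' : (1:ℝ) ≤ (cnt v (v ⟨0, hn⟩) : ℝ) := by exact_mod_cast hc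
    have h1 : (1:ℝ) ≤ (cnt v (v ⟨0, hn⟩) : ℝ) ^ 2 := by nlinarith
    have h2 : (cnt v (v ⟨0, hn⟩) : ℝ) ^ 2 ≤ ∑ y, (cnt v y : ℝ) ^ 2 :=
      Finset.single_le_sum (f := fun y => (cnt v y : ℝ) ^ 2) (fun y _ => sq_nonneg _)
        (Finset.mem_univ _)
    linarith
  have h1 : ∀ a, Lam (fun j => pj (a j)) / ((d ^ m : ℕ) : ℝ) ≤ Real.log (F a) :=
    fun a => Lam_le_log hn _
  have h2 : ∑ a, (1 / (M:ℝ)) * Real.log (F a) ≤ Real.log (∑ a, (1 / (M:ℝ)) * F a) := by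
    refine weighted_log_le Finset.univ _ _ (fun a _ => by positivity) ?_
      (fun a _ => (hFpos a).le) (fun a _ _ => (hFpos a).ne')
    rw [Finset.sum_const, Finset.card_univ, ← hMdef, nsmul_eq_mul]
    field_simp
  have h3 : ∑ a, F a = ((W:ℝ) ^ (d ^ m) + (((d ^ m : ℕ) : ℝ) - 1) * (W:ℝ) ^ (d ^ m - 1)
      * ((d ^ (N - k) : ℕ) : ℝ)) := by
    rw [hFdef, ← Finset.sum_div]
    rw [exp_sum_sq (d ^ m) pj (d ^ (N - k)) hreg]
    rw [← hWdef]
    field_simp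
  have hkey : ((d ^ m : ℕ) : ℝ) * ((d ^ (N - k) : ℕ) : ℝ) ≤ ((d:ℝ) ^ (m - k)) * (W:ℝ) := by
    have hnat : d ^ m * d ^ (N - k) ≤ d ^ (m - k) * d ^ N := by
      rw [← pow_add, ← pow_add]
      exact Nat.pow_le_pow_right hd0 (by omega)
    rw [hWcard]
    exact_mod_cast hnat
  have hone : (1:ℝ) ≤ (d:ℝ) ^ (m - k) :=
    one_le_pow₀ (by exact_mod_cast hd0 : (1:ℝ) ≤ (d:ℝ))
  have hWpow : (W:ℝ) ^ (d ^ m - 1) * (W:ℝ) = (W:ℝ) ^ (d ^ m) := by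
    have he : d ^ m = (d ^ m - 1) + 1 := by omega
    conv_rhs => rw [he]
    rw [pow_succ]
  have hWn0' : (0:ℝ) < (W:ℝ) ^ (d ^ m) := pow_pos hW' _
  have h4 : ∑ a, (1 / (M:ℝ)) * F a ≤ 2 * (d:ℝ) ^ (m - k) := by
    rw [← Finset.mul_sum, h3, hMcard]
    have hMW : ((W ^ d ^ m : ℕ) : ℝ) = (W:ℝ) ^ (d ^ m) := by push_cast; rfl
    rw [hMW, one_div, inv_mul_le_iff₀ hWn0']
    have hK0 : (0:ℝ) ≤ ((d ^ (N - k) : ℕ) : ℝ) := Nat.cast_nonneg _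
    have hWp0 : (0:ℝ) ≤ (W:ℝ) ^ (d ^ m - 1) := by positivity
    have hn1 : (1:ℝ) ≤ ((d ^ m : ℕ) : ℝ) := by exact_mod_cast hn
    have step1 : (((d ^ m : ℕ) : ℝ) - 1) * ((W:ℝ) ^ (d ^ m - 1) * ((d ^ (N - k) : ℕ) : ℝ))
        ≤ ((d:ℝ) ^ (m - k)) * (W:ℝ) ^ (d ^ m) := by
      calc (((d ^ m : ℕ) : ℝ) - 1) * ((W:ℝ) ^ (d ^ m - 1) * ((d ^ (N - k) : ℕ) : ℝ))
          ≤ ((d ^ m : ℕ) : ℝ) * ((W:ℝ) ^ (d ^ m - 1) * ((d ^ (N - k) : ℕ) : ℝ)) := by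
            have : (0:ℝ) ≤ (W:ℝ) ^ (d ^ m - 1) * ((d ^ (N - k) : ℕ) : ℝ) := by positivity
            nlinarith
        _ = (((d ^ m : ℕ) : ℝ) * ((d ^ (N - k) : ℕ) : ℝ)) * (W:ℝ) ^ (d ^ m - 1) := by ring
        _ ≤ (((d:ℝ) ^ (m - k)) * (W:ℝ)) * (W:ℝ) ^ (d ^ m - 1) :=
            mul_le_mul_of_nonneg_right hkey hWp0
        _ = ((d:ℝ) ^ (m - k)) * ((W:ℝ) ^ (d ^ m - 1) * (W:ℝ)) := by ring
        _ = ((d:ℝ) ^ (m - k)) * (W:ℝ) ^ (d ^ m) := by rw [hWpow]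
    have step2 : (W:ℝ) ^ (d ^ m) ≤ ((d:ℝ) ^ (m - k)) * (W:ℝ) ^ (d ^ m) := by
      nlinarith
    nlinarith
  have h5 : (1 / (M:ℝ)) * ∑ a, Real.log (F a)
      ≤ Real.log 2 + ((m - k : ℕ) : ℝ) * Real.log d := by
    have hpos : 0 < ∑ a, (1 / (M:ℝ)) * F a := by
      refine Finset.sum_pos (fun a _ => ?_) Finset.univ_nonempty
      have := hFpos a
      positivity
    calc (1 / (M:ℝ)) * ∑ a, Real.log (F a) = ∑ a, (1 / (M:ℝ)) * Real.log (F a) :=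
          Finset.mul_sum _ _ _
      _ ≤ Real.log (∑ a, (1 / (M:ℝ)) * F a) := h2
      _ ≤ Real.log (2 * (d:ℝ) ^ (m - k)) := Real.log_le_log hpos h4
      _ = Real.log 2 + ((m - k : ℕ) : ℝ) * Real.log d := by
          rw [Real.log_mul two_ne_zero (by positivity), Real.log_pow]
  calc ∑ a : Fin (d ^ m) → (Fin N → Fin d), Lam (fun j => pj (a j)) / ((d ^ m : ℕ) : ℝ)
      ≤ ∑ a, Real.log (F a) := Finset.sum_le_sum (fun a _ => h1 a)
    _ = (M:ℝ) * ((1 / (M:ℝ)) * ∑ a, Real.log (F a)) := by field_simp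
    _ ≤ (M:ℝ) * (Real.log 2 + ((m - k : ℕ) : ℝ) * Real.log d) :=
        mul_le_mul_of_nonneg_left h5 hM'.le


noncomputable def eE (d N m : ℕ) (a : Fin (d ^ m) → (Fin N → Fin d)) (S : Finset (Fin N)) : ℝ :=
  Lam (fun j => pr S (a j)) / ((d ^ m : ℕ) : ℝ) - ((m - S.card : ℕ) : ℝ) * Real.log d

noncomputable def eid (d N m : ℕ) (a : Fin (d ^ m) → (Fin N → Fin d)) : ℝ :=
  Lam a / ((d ^ m : ℕ) : ℝ)

noncomputable def phi (d N m : ℕ) (a : Fin (d ^ m) → (Fin N → Fin d)) : ℝ :=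
  (1 / (N + 1 : ℝ)) * ∑ S : Finset (Fin N),
      (1 / (N.choose S.card : ℝ)) * (eE d N m a S + eE d N m a Sᶜ)
    + eid d N m a

lemma card_gammaS {d N : ℕ} (S : Finset (Fin N)) :
    Fintype.card ({i // i ∈ S} → Fin d) = d ^ S.card := by
  rw [Fintype.card_fun, Fintype.card_fin, Fintype.card_coe]

lemma eE_nonneg (d N m : ℕ) (hd : 2 ≤ d) (a : Fin (d ^ m) → (Fin N → Fin d))
    (S : Finset (Fin N)) : 0 ≤ eE d N m a S := by
  have h := Lam_div_ge d m S.card hd (card_gammaS S) (fun j => pr S (a j))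
  rw [eE]
  linarith

lemma eid_nonneg (d N m : ℕ) (hd : 2 ≤ d) (a : Fin (d ^ m) → (Fin N → Fin d)) :
    0 ≤ eid d N m a := by
  have hn' : (0:ℝ) ≤ ((d ^ m : ℕ) : ℝ) := Nat.cast_nonneg _
  exact div_nonneg (Lam_nonneg a) hn'

lemma phi_ge_eid (d N m : ℕ) (hd : 2 ≤ d) (a : Fin (d ^ m) → (Fin N → Fin d)) :
    eid d N m a ≤ phi d N m a := by
  rw [phi]
  have h1 : 0 ≤ (1 / (N + 1 : ℝ)) * ∑ S : Finset (Fin N),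
      (1 / (N.choose S.card : ℝ)) * (eE d N m a S + eE d N m a Sᶜ) := by
    refine mul_nonneg (by positivity) (Finset.sum_nonneg fun S _ => ?_)
    refine mul_nonneg (by positivity) ?_
    have := eE_nonneg d N m hd a S
    have := eE_nonneg d N m hd a Sᶜ
    linarith
  linarith

lemma phi_ge_big (d N m : ℕ) (hd : 2 ≤ d) (a : Fin (d ^ m) → (Fin N → Fin d)) :
    (1 / (N + 1 : ℝ)) * ∑ S : Finset (Fin N),
      (1 / (N.choose S.card : ℝ)) * (eE d N m a S + eE d N m a Sᶜ) ≤ phi d N m a := by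
  rw [phi]
  have := eid_nonneg d N m hd a
  linarith

lemma sum_eE_le (d N m : ℕ) (hd : 2 ≤ d) (hm : m ≤ N) (S : Finset (Fin N)) :
    ∑ a : Fin (d ^ m) → (Fin N → Fin d), eE d N m a S
      ≤ (Fintype.card (Fin (d ^ m) → (Fin N → Fin d)) : ℝ) * Real.log 2 := by
  have hkN : S.card ≤ N := by
    have := Finset.card_le_univ S
    rwa [Fintype.card_fin] at this
  have h := avg_Lam_le hd m S.card hkN (card_gammaS S) (pr S) (card_fiber S)
  simp only [eE]
  rw [Finset.sum_sub_distrib, Finset.sum_const, Finset.card_univ, nsmul_eq_mul]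
  have hM0 : (0:ℝ) ≤ (Fintype.card (Fin (d ^ m) → (Fin N → Fin d)) : ℝ) := Nat.cast_nonneg _
  nlinarith [h]

lemma sum_eid_le (d N m : ℕ) (hd : 2 ≤ d) (hm : m ≤ N) :
    ∑ a : Fin (d ^ m) → (Fin N → Fin d), eid d N m a
      ≤ (Fintype.card (Fin (d ^ m) → (Fin N → Fin d)) : ℝ) * Real.log 2 := by
  have hreg : ∀ y : Fin N → Fin d,
      (Finset.univ.filter fun x : Fin N → Fin d => x = y).card = d ^ (N - N) := by
    intro y
    rw [Nat.sub_self, pow_zero]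
    rw [Finset.filter_eq', if_pos (Finset.mem_univ y), Finset.card_singleton]
  have hγ : Fintype.card (Fin N → Fin d) = d ^ N := by
    rw [Fintype.card_fun, Fintype.card_fin, Fintype.card_fin]
  have h := avg_Lam_le hd m N le_rfl hγ (fun x => x) hreg
  have hmN : m - N = 0 := by omega
  rw [hmN] at h
  simp only [Nat.cast_zero, zero_mul, add_zero] at h
  simpa only [eid] using h

lemma exists_good (d N m : ℕ) (hd : 2 ≤ d) (hm : m ≤ N) :
    ∃ μ : (Fin N → Fin d) → ℝ, IsPMF μ ∧
      (m : ℝ) * Real.log d - 3 * Real.log 2 ≤ entropy μ ∧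
      entropy μ ≤ (m : ℝ) * Real.log d ∧
      |neural μ - ((m * (N - m) : ℕ) : ℝ) * Real.log d / (N + 1)| ≤ 3 * Real.log 2 := by
  classical
  have hd0 : 0 < d := by omega
  have hn : 0 < d ^ m := pow_pos hd0 m
  have hn' : (0:ℝ) < ((d ^ m : ℕ) : ℝ) := by exact_mod_cast hn
  have hne : Nonempty (Fin (d ^ m) → Fin N → Fin d) := ⟨fun _ _ => ⟨0, hd0⟩⟩
  have hN1 : (0:ℝ) < (N:ℝ) + 1 := by positivity
  set M := Fintype.card (Fin (d ^ m) → (Fin N → Fin d)) with hMdef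
  -- average of phi is at most 3 log 2
  have hφsum : ∑ a : Fin (d ^ m) → (Fin N → Fin d), phi d N m a ≤ (M:ℝ) * (3 * Real.log 2) := by
    simp only [phi]
    rw [Finset.sum_add_distrib]
    have hpart1 : ∑ a : Fin (d ^ m) → (Fin N → Fin d), (1 / (N + 1 : ℝ)) *
        ∑ S : Finset (Fin N), (1 / (N.choose S.card : ℝ)) * (eE d N m a S + eE d N m a Sᶜ)
        ≤ (M:ℝ) * (2 * Real.log 2) := by
      rw [← Finset.mul_sum, Finset.sum_comm]
      have hinner : ∀ S : Finset (Fin N),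
          ∑ a : Fin (d ^ m) → (Fin N → Fin d),
            (1 / (N.choose S.card : ℝ)) * (eE d N m a S + eE d N m a Sᶜ)
          ≤ (1 / (N.choose S.card : ℝ)) * ((M:ℝ) * (2 * Real.log 2)) := by
        intro S
        rw [← Finset.mul_sum]
        refine mul_le_mul_of_nonneg_left ?_ (by positivity)
        rw [Finset.sum_add_distrib]
        have h1 := sum_eE_le d N m hd hm S
        have h2 := sum_eE_le d N m hd hm Sᶜ
        rw [← hMdef] at h1 h2
        linarith
      have hsum2 : ∑ S : Finset (Fin N),
          (1 / (N.choose S.card : ℝ)) * ((M:ℝ) * (2 * Real.log 2))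
          = ((N:ℝ) + 1) * ((M:ℝ) * (2 * Real.log 2)) := by
        rw [sum_choose_weight (fun _ => (M:ℝ) * (2 * Real.log 2))]
        rw [Finset.sum_const, Finset.card_range, nsmul_eq_mul]
        push_cast
        ring
      have hle := Finset.sum_le_sum (fun S (_ : S ∈ Finset.univ) => hinner S)
      rw [hsum2] at hle
      calc (1 / ((N:ℝ) + 1)) * ∑ S : Finset (Fin N), ∑ a : Fin (d ^ m) → (Fin N → Fin d),
            (1 / (N.choose S.card : ℝ)) * (eE d N m a S + eE d N m a Sᶜ)
          ≤ (1 / ((N:ℝ) + 1)) * (((N:ℝ) + 1) * ((M:ℝ) * (2 * Real.log 2))) :=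
            mul_le_mul_of_nonneg_left hle (by positivity)
        _ = (M:ℝ) * (2 * Real.log 2) := by field_simp
    have hpart2 := sum_eid_le d N m hd hm
    rw [← hMdef] at hpart2
    linarith
  -- pick a good a
  have hex : ∃ a : Fin (d ^ m) → (Fin N → Fin d), phi d N m a ≤ 3 * Real.log 2 := by
    have hconst : ∑ _a : Fin (d ^ m) → (Fin N → Fin d), (3 * Real.log 2)
        = (M:ℝ) * (3 * Real.log 2) := by
      rw [Finset.sum_const, Finset.card_univ, ← hMdef, nsmul_eq_mul]
    obtain ⟨a, _, ha⟩ := Finset.exists_le_of_sum_le (s := Finset.univ)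
      (f := phi d N m) (g := fun _ => 3 * Real.log 2) Finset.univ_nonempty
      (by rw [hconst]; exact hφsum)
    exact ⟨a, ha⟩
  obtain ⟨a, ha⟩ := hex
  have heid0 := eid_nonneg d N m hd a
  have heid3 : eid d N m a ≤ 3 * Real.log 2 := le_trans (phi_ge_eid d N m hd a) ha
  have hbig0 : 0 ≤ (1 / (N + 1 : ℝ)) * ∑ S : Finset (Fin N),
      (1 / (N.choose S.card : ℝ)) * (eE d N m a S + eE d N m a Sᶜ) := by
    refine mul_nonneg (by positivity) (Finset.sum_nonneg fun S _ => mul_nonneg (by positivity) ?_)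
    have := eE_nonneg d N m hd a S
    have := eE_nonneg d N m hd a Sᶜ
    linarith
  have hbig3 : (1 / (N + 1 : ℝ)) * ∑ S : Finset (Fin N),
      (1 / (N.choose S.card : ℝ)) * (eE d N m a S + eE d N m a Sᶜ) ≤ 3 * Real.log 2 :=
    le_trans (phi_ge_big d N m hd a) ha
  have hent : entropy (emp a) = (m:ℝ) * Real.log d - eid d N m a := by
    rw [entropy_emp hn a, eid]
    have hl : Real.log ((d ^ m : ℕ) : ℝ) = (m:ℝ) * Real.log d := by
      push_cast
      rw [Real.log_pow]
    rw [hl]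
  refine ⟨emp a, isPMF_emp hn a, ?_, ?_, ?_⟩
  · rw [hent]; linarith
  · rw [hent]; linarith
  -- neural
  have hMIS : ∀ S : Finset (Fin N), MIS (emp a) S
      = ((m:ℝ) * Real.log d - ((m - S.card : ℕ) : ℝ) * Real.log d
          - ((m - (N - S.card) : ℕ) : ℝ) * Real.log d)
        + eid d N m a - (eE d N m a S + eE d N m a Sᶜ) := by
    intro S
    have hSc : (Sᶜ : Finset (Fin N)).card = N - S.card := by
      rw [Finset.card_compl, Fintype.card_fin]
    rw [MIS, margin_emp a S, margin_emp a Sᶜ, entropy_emp hn, entropy_emp hn, hent]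
    simp only [eE, hSc]
    have hlog : Real.log ((d ^ m : ℕ) : ℝ) = (m:ℝ) * Real.log d := by
      push_cast
      rw [Real.log_pow]
    rw [hlog]
    ring
  have hneural : neural (emp a)
      = ((m * (N - m) : ℕ) : ℝ) * Real.log d / (N + 1)
        + eid d N m a
        - (1 / (N + 1 : ℝ)) * ∑ S : Finset (Fin N),
            (1 / (N.choose S.card : ℝ)) * (eE d N m a S + eE d N m a Sᶜ) := by
    rw [neural]
    have hsplit : ∀ S : Finset (Fin N), (1 / (N.choose S.card : ℝ)) * MIS (emp a) S
        = (1 / (N.choose S.card : ℝ)) * (((m:ℝ) * Real.log d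
              - ((m - S.card : ℕ) : ℝ) * Real.log d
              - ((m - (N - S.card) : ℕ) : ℝ) * Real.log d)
            + eid d N m a)
          - (1 / (N.choose S.card : ℝ)) * (eE d N m a S + eE d N m a Sᶜ) := by
      intro S
      rw [hMIS S]
      ring
    rw [Finset.sum_congr rfl fun S _ => hsplit S, Finset.sum_sub_distrib]
    rw [sum_choose_weight (fun k => ((m:ℝ) * Real.log d - ((m - k : ℕ) : ℝ) * Real.log d
      - ((m - (N - k) : ℕ) : ℝ) * Real.log d) + eid d N m a)]
    have hgauss : ∑ k ∈ Finset.range (N + 1), (((m:ℝ) * Real.log d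
        - ((m - k : ℕ) : ℝ) * Real.log d - ((m - (N - k) : ℕ) : ℝ) * Real.log d)
          + eid d N m a)
        = ((m * (N - m) : ℕ) : ℝ) * Real.log d + ((N:ℝ) + 1) * eid d N m a := by
      rw [Finset.sum_add_distrib, Finset.sum_const, Finset.card_range, nsmul_eq_mul]
      rw [Finset.sum_sub_distrib, Finset.sum_sub_distrib]
      rw [Finset.sum_const, Finset.card_range, nsmul_eq_mul]
      rw [← Finset.sum_mul, ← Finset.sum_mul]
      rw [reflect_sum N m, gauss_sum N m hm]
      have hc : ((m * (N - m) : ℕ) : ℝ) = (m:ℝ) * ((N:ℝ) - (m:ℝ)) := by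
        push_cast [Nat.cast_sub hm]
        ring
      rw [hc]
      push_cast
      ring
    rw [hgauss]
    field_simp
  rw [hneural]
  have habs : |eid d N m a - (1 / (N + 1 : ℝ)) * ∑ S : Finset (Fin N),
      (1 / (N.choose S.card : ℝ)) * (eE d N m a S + eE d N m a Sᶜ)| ≤ 3 * Real.log 2 := by
    rw [abs_le]
    constructor <;> linarith
  have : ((m * (N - m) : ℕ) : ℝ) * Real.log d / (N + 1)
        + eid d N m a
        - (1 / (N + 1 : ℝ)) * ∑ S : Finset (Fin N),
            (1 / (N.choose S.card : ℝ)) * (eE d N m a S + eE d N m a Sᶜ)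
        - ((m * (N - m) : ℕ) : ℝ) * Real.log d / (N + 1)
      = eid d N m a - (1 / (N + 1 : ℝ)) * ∑ S : Finset (Fin N),
            (1 / (N.choose S.card : ℝ)) * (eE d N m a S + eE d N m a Sᶜ) := by ring
  rw [this]
  exact habs

/-- For every integer `d ≥ 2` and every `x ∈ [0,1]`, there exists a sequence of
probability measures `μ^N ∈ M(d,N)` with `H(μ^N)/(N log d) → x` and
`I(μ^N)/(N log d) → x(1−x)`, where `I` is the neural complexity. -/
theorem stmt2 (d : ℕ) (hd : 2 ≤ d) (x : ℝ) (hx : x ∈ Set.Icc (0:ℝ) 1) :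
    ∃ μ : (N : ℕ) → (Fin N → Fin d) → ℝ, (∀ N, IsPMF (μ N)) ∧
      Tendsto (fun N : ℕ => entropy (μ N) / (N * Real.log d)) atTop (nhds x) ∧
      Tendsto (fun N : ℕ => neural (μ N) / (N * Real.log d)) atTop (nhds (x * (1 - x))) := by
  obtain ⟨hx0, hx1⟩ := hx
  have hd0 : 0 < d := by omega
  have hd1 : (1:ℝ) < d := by exact_mod_cast hd
  have hld : 0 < Real.log d := Real.log_pos hd1
  have hl2d : Real.log 2 ≤ Real.log d :=
    Real.log_le_log (by norm_num) (by exact_mod_cast hd)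
  have h2pos : (0:ℝ) < Real.log 2 := Real.log_pos (by norm_num)
  have hmle : ∀ N : ℕ, ⌊x * N⌋₊ ≤ N := by
    intro N
    have h1 : x * N ≤ N := by nlinarith [Nat.cast_nonneg (α := ℝ) N]
    calc ⌊x * N⌋₊ ≤ ⌊(N:ℝ)⌋₊ := Nat.floor_le_floor h1
      _ = N := Nat.floor_natCast N
  refine ⟨fun N => (exists_good d N ⌊x * N⌋₊ hd (hmle N)).choose,
    fun N => (exists_good d N ⌊x * N⌋₊ hd (hmle N)).choose_spec.1, ?_, ?_⟩
  · rw [tendsto_iff_dist_tendsto_zero]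
    refine squeeze_zero' (Filter.Eventually.of_forall fun N => dist_nonneg) ?_
      (tendsto_const_div_atTop_nhds_zero_nat 4)
    rw [Filter.eventually_atTop]
    refine ⟨1, fun N hN => ?_⟩
    obtain ⟨_, hent1, hent2, _⟩ := (exists_good d N ⌊x * N⌋₊ hd (hmle N)).choose_spec
    set E := entropy ((exists_good d N ⌊x * N⌋₊ hd (hmle N)).choose) with hE
    set m := ⌊x * N⌋₊ with hmdef
    have ht : (1:ℝ) ≤ (N:ℝ) := by exact_mod_cast hN
    have ht0 : (0:ℝ) < (N:ℝ) := by linarith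
    have hfl1 : (m:ℝ) ≤ x * N := Nat.floor_le (by positivity)
    have hfl2 : x * N - 1 ≤ (m:ℝ) := by
      have := Nat.lt_floor_add_one (x * N)
      rw [← hmdef] at this
      linarith
    rw [Real.dist_eq]
    have hden : (0:ℝ) < (N:ℝ) * Real.log d := by positivity
    have hnum : |E - x * ((N:ℝ) * Real.log d)| ≤ 3 * Real.log 2 + Real.log d := by
      have h1 : |E - (m:ℝ) * Real.log d| ≤ 3 * Real.log 2 :=
        abs_le.mpr ⟨by linarith, by linarith⟩
      have h3 : |(m:ℝ) - x * N| ≤ 1 := abs_le.mpr ⟨by linarith, by linarith⟩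
      have h2 : |(m:ℝ) * Real.log d - x * ((N:ℝ) * Real.log d)|
          = |(m:ℝ) - x * N| * Real.log d := by
        rw [← abs_of_pos hld, ← abs_mul, abs_of_pos hld]
        congr 1
        ring
      calc |E - x * ((N:ℝ) * Real.log d)|
          ≤ |E - (m:ℝ) * Real.log d| + |(m:ℝ) * Real.log d - x * ((N:ℝ) * Real.log d)| := by
            have : E - x * ((N:ℝ) * Real.log d) = (E - (m:ℝ) * Real.log d)
                + ((m:ℝ) * Real.log d - x * ((N:ℝ) * Real.log d)) := by ring
            rw [this]
            exact abs_add_le _ _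
        _ ≤ 3 * Real.log 2 + 1 * Real.log d := by
            rw [h2]
            have := mul_le_mul_of_nonneg_right h3 hld.le
            linarith
        _ = 3 * Real.log 2 + Real.log d := by ring
    have heq : E / ((N:ℝ) * Real.log d) - x = (E - x * ((N:ℝ) * Real.log d))
        / ((N:ℝ) * Real.log d) := by
      field_simp
    rw [heq, abs_div, abs_of_pos hden]
    calc |E - x * ((N:ℝ) * Real.log d)| / ((N:ℝ) * Real.log d)
        ≤ (3 * Real.log 2 + Real.log d) / ((N:ℝ) * Real.log d) := by
          exact div_le_div_of_nonneg_right hnum hden.le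
      _ ≤ 4 / (N:ℝ) := by
          rw [div_le_div_iff₀ hden ht0]
          nlinarith [mul_le_mul_of_nonneg_left hl2d ht0.le]
  · rw [tendsto_iff_dist_tendsto_zero]
    refine squeeze_zero' (Filter.Eventually.of_forall fun N => dist_nonneg) ?_
      (tendsto_const_div_atTop_nhds_zero_nat 8)
    rw [Filter.eventually_atTop]
    refine ⟨1, fun N hN => ?_⟩
    obtain ⟨_, _, _, hneu⟩ := (exists_good d N ⌊x * N⌋₊ hd (hmle N)).choose_spec
    set G := neural ((exists_good d N ⌊x * N⌋₊ hd (hmle N)).choose) with hG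
    set m := ⌊x * N⌋₊ with hmdef
    have ht : (1:ℝ) ≤ (N:ℝ) := by exact_mod_cast hN
    have ht0 : (0:ℝ) < (N:ℝ) := by linarith
    have ht1 : (0:ℝ) < (N:ℝ) + 1 := by linarith
    have hfl1 : (m:ℝ) ≤ x * N := Nat.floor_le (by positivity)
    have hfl2 : x * N - 1 ≤ (m:ℝ) := by
      have := Nat.lt_floor_add_one (x * N)
      rw [← hmdef] at this
      linarith
    have hmN : (m:ℝ) ≤ (N:ℝ) := by exact_mod_cast hmle N
    have hm0 : (0:ℝ) ≤ (m:ℝ) := Nat.cast_nonneg _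
    have hden : (0:ℝ) < (N:ℝ) * Real.log d := by positivity
    rw [Real.dist_eq]
    set A := ((m * (N - m) : ℕ) : ℝ) * Real.log d / ((N:ℝ) + 1) with hA
    have hcast : ((m * (N - m) : ℕ) : ℝ) = (m:ℝ) * ((N:ℝ) - (m:ℝ)) := by
      push_cast [Nat.cast_sub (show m ≤ N from hmle N)]
      ring
    have h1 : |G / ((N:ℝ) * Real.log d) - A / ((N:ℝ) * Real.log d)| ≤ 3 / (N:ℝ) := by
      have heq : G / ((N:ℝ) * Real.log d) - A / ((N:ℝ) * Real.log d)
          = (G - A) / ((N:ℝ) * Real.log d) := by ring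
      rw [heq, abs_div, abs_of_pos hden]
      calc |G - A| / ((N:ℝ) * Real.log d)
          ≤ (3 * Real.log 2) / ((N:ℝ) * Real.log d) :=
            div_le_div_of_nonneg_right hneu hden.le
        _ ≤ 3 / (N:ℝ) := by
            rw [div_le_div_iff₀ hden ht0]
            nlinarith [mul_le_mul_of_nonneg_left hl2d ht0.le]
    have hAq : A / ((N:ℝ) * Real.log d) = ((m:ℝ) * ((N:ℝ) - (m:ℝ))) / (((N:ℝ) + 1) * (N:ℝ)) := by
      rw [hA, hcast]
      field_simp
    have h2 : |A / ((N:ℝ) * Real.log d) - x * (1 - x)| ≤ 5 / (N:ℝ) := by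
      rw [hAq]
      have hnum : |(m:ℝ) * ((N:ℝ) - (m:ℝ)) - x * (1 - x) * (((N:ℝ) + 1) * (N:ℝ))|
          ≤ 5 * ((N:ℝ) + 1) := by
        rw [abs_le]
        constructor
        · nlinarith [sq_nonneg (x * N - m), mul_nonneg hx0 ht0.le,
            mul_nonneg (sub_nonneg.mpr hx1) ht0.le, mul_nonneg hm0 (sub_nonneg.mpr hmN),
            mul_nonneg (mul_nonneg hx0 (sub_nonneg.mpr hx1)) ht0.le]
        · nlinarith [sq_nonneg (x * N - m), mul_nonneg hx0 ht0.le,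
            mul_nonneg (sub_nonneg.mpr hx1) ht0.le, mul_nonneg hm0 (sub_nonneg.mpr hmN),
            mul_nonneg (mul_nonneg hx0 (sub_nonneg.mpr hx1)) ht0.le]
      have heq2 : (m:ℝ) * ((N:ℝ) - (m:ℝ)) / (((N:ℝ) + 1) * (N:ℝ)) - x * (1 - x)
          = ((m:ℝ) * ((N:ℝ) - (m:ℝ)) - x * (1 - x) * (((N:ℝ) + 1) * (N:ℝ)))
            / (((N:ℝ) + 1) * (N:ℝ)) := by
        field_simp
      have hden2 : (0:ℝ) < ((N:ℝ) + 1) * (N:ℝ) := by positivity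
      rw [heq2, abs_div, abs_of_pos hden2]
      calc |(m:ℝ) * ((N:ℝ) - (m:ℝ)) - x * (1 - x) * (((N:ℝ) + 1) * (N:ℝ))|
            / (((N:ℝ) + 1) * (N:ℝ))
          ≤ (5 * ((N:ℝ) + 1)) / (((N:ℝ) + 1) * (N:ℝ)) :=
            div_le_div_of_nonneg_right hnum hden2.le
        _ = 5 / (N:ℝ) := by
            field_simp
    calc |G / ((N:ℝ) * Real.log d) - x * (1 - x)|
        ≤ |G / ((N:ℝ) * Real.log d) - A / ((N:ℝ) * Real.log d)|
          + |A / ((N:ℝ) * Real.log d) - x * (1 - x)| := by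
          have : G / ((N:ℝ) * Real.log d) - x * (1 - x)
              = (G / ((N:ℝ) * Real.log d) - A / ((N:ℝ) * Real.log d))
                + (A / ((N:ℝ) * Real.log d) - x * (1 - x)) := by ring
          rw [this]
          exact abs_add_le _ _
      _ ≤ 3 / (N:ℝ) + 5 / (N:ℝ) := add_le_add h1 h2
      _ = 8 / (N:ℝ) := by
          rw [← add_div]
          norm_num
end Count2
end

section
/- Let d ≥ 2 and x ∈ [0,1]. For any sequence μ^N ∈ M(d,N) that is an approximate x-maximizer for the neural complexity, sup_{t∈[0,1]} |h_{μ^N}(t) − h*_x(t)| → 0 as N → ∞. In particular, for any sequence μ^N ∈ M(d,N) with lim_{N→∞} I(μ^N)/N = (log d)/4, one has lim_{N→∞} H(μ^N)/(N log d) = 1/2 and lim_{N→∞} sup_{t∈[0,1]} |h_{μ^N}(t) − h*_{1/2}(t)| = 0. -/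
open Filter

section pushfwd
set_option linter.unusedSectionVars false
variable {α β γ : Type*} [Fintype α] [Fintype β] [Fintype γ] [DecidableEq α] [DecidableEq β] [DecidableEq γ]

noncomputable def pushfwd (f : α → β) (p : α → ℝ) : β → ℝ :=
  fun b => ∑ a, if f a = b then p a else 0

lemma pushfwd_nonneg {f : α → β} {p : α → ℝ} (hp : ∀ a, 0 ≤ p a) (b : β) :
    0 ≤ pushfwd f p b := by
  refine Finset.sum_nonneg fun a _ => ?_
  split
  · exact hp a
  · exact le_rfl

lemma sum_pushfwd (f : α → β) (p : α → ℝ) : ∑ b, pushfwd f p b = ∑ a, p a := by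
  unfold pushfwd
  rw [Finset.sum_comm]
  refine Finset.sum_congr rfl fun a _ => ?_
  simp [Finset.sum_ite_eq]

lemma isPMF_pushfwd (f : α → β) {p : α → ℝ} (hp : IsPMF p) : IsPMF (pushfwd f p) :=
  ⟨pushfwd_nonneg hp.1, by rw [sum_pushfwd]; exact hp.2⟩

lemma sum_mul_comp (f : α → β) (p : α → ℝ) (F : β → ℝ) :
    ∑ a, p a * F (f a) = ∑ b, pushfwd f p b * F b := by
  symm
  unfold pushfwd
  calc ∑ b, (∑ a, if f a = b then p a else 0) * F b
      = ∑ b, ∑ a, (if f a = b then p a else 0) * F b := by simp [Finset.sum_mul]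
    _ = ∑ a, ∑ b, (if f a = b then p a else 0) * F b := Finset.sum_comm
    _ = ∑ a, p a * F (f a) := by
        refine Finset.sum_congr rfl fun a _ => ?_
        simp [ite_mul, Finset.sum_ite_eq]

lemma pushfwd_comp (f : α → β) (g : β → γ) (p : α → ℝ) :
    pushfwd g (pushfwd f p) = pushfwd (g ∘ f) p := by
  funext c
  unfold pushfwd
  calc ∑ b, (if g b = c then ∑ a, if f a = b then p a else 0 else 0)
      = ∑ b, ∑ a, (if g b = c then (if f a = b then p a else 0) else 0) := by
        refine Finset.sum_congr rfl fun b _ => ?_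
        split <;> simp
    _ = ∑ a, ∑ b, (if g b = c then (if f a = b then p a else 0) else 0) := Finset.sum_comm
    _ = ∑ a, if (g ∘ f) a = c then p a else 0 := by
        refine Finset.sum_congr rfl fun a _ => ?_
        rw [Finset.sum_eq_single (f a)]
        · simp
        · intro b _ hb
          split
          · rw [if_neg (fun h => hb h.symm)]
          · rfl
        · intro h
          exact absurd (Finset.mem_univ _) h

lemma le_pushfwd {f : α → β} {p : α → ℝ} (hp : ∀ a, 0 ≤ p a) (a : α) :
    p a ≤ pushfwd f p (f a) := by
  unfold pushfwd
  have h : p a = if f a = f a then p a else 0 := by simp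
  rw [h]
  refine Finset.single_le_sum (f := fun a' => if f a' = f a then p a' else 0)
    (fun a' _ => ?_) (Finset.mem_univ a)
  (try dsimp only); split
  · exact hp a'
  · exact le_rfl

lemma entropy_nonneg {p : α → ℝ} (hp : IsPMF p) : 0 ≤ entropy p := by
  unfold entropy
  rw [neg_nonneg]
  refine Finset.sum_nonpos fun a _ => ?_
  rcases eq_or_lt_of_le (hp.1 a) with h | h
  · simp [← h]
  · have h1 : p a ≤ 1 := by
      rw [← hp.2]
      exact Finset.single_le_sum (fun a' _ => hp.1 a') (Finset.mem_univ a)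
    exact mul_nonpos_of_nonneg_of_nonpos (le_of_lt h) (Real.log_nonpos (le_of_lt h) h1)

lemma gibbs {p q : α → ℝ} (hp : IsPMF p) (hq0 : ∀ a, 0 ≤ q a) (hq1 : ∑ a, q a ≤ 1)
    (hpq : ∀ a, 0 < p a → 0 < q a) : entropy p ≤ -∑ a, p a * Real.log (q a) := by
  have h : ∀ a, p a * Real.log (q a) - p a * Real.log (p a) ≤ q a - p a := by
    intro a
    rcases eq_or_lt_of_le (hp.1 a) with h0 | h0
    · simp [← h0]; exact hq0 a
    · have hqa := hpq a h0
      have hlog : Real.log (q a) - Real.log (p a) = Real.log (q a / p a) :=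
        (Real.log_div (ne_of_gt hqa) (ne_of_gt h0)).symm
      calc p a * Real.log (q a) - p a * Real.log (p a)
          = p a * Real.log (q a / p a) := by rw [← mul_sub, hlog]
        _ ≤ p a * (q a / p a - 1) := by
            refine mul_le_mul_of_nonneg_left (Real.log_le_sub_one_of_pos ?_) h0.le
            positivity
        _ = q a - p a := by field_simp
  have h2 : ∑ a, (p a * Real.log (q a) - p a * Real.log (p a)) ≤ ∑ a, (q a - p a) :=
    Finset.sum_le_sum fun a _ => h a
  rw [Finset.sum_sub_distrib, Finset.sum_sub_distrib, hp.2] at h2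
  unfold entropy
  linarith

lemma entropy_le_log_card {p : α → ℝ} (hp : IsPMF p) :
    entropy p ≤ Real.log (Fintype.card α) := by
  have hne : Nonempty α := by
    by_contra h
    rw [not_nonempty_iff] at h
    have := hp.2
    rw [Finset.sum_eq_zero (fun a _ => ((h.false a).elim))] at this
    norm_num at this
  have hcard : (0:ℝ) < Fintype.card α := by
    have := Fintype.card_pos_iff.2 hne
    exact_mod_cast this
  have := gibbs hp (q := fun _ => (Fintype.card α : ℝ)⁻¹) (fun a => by positivity)
    (le_of_eq (by
      rw [Finset.sum_const, Finset.card_univ, nsmul_eq_mul,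
        mul_inv_cancel₀ (ne_of_gt hcard)]))
    (fun a _ => by positivity)
  calc entropy p ≤ -∑ a, p a * Real.log (Fintype.card α : ℝ)⁻¹ := this
    _ = Real.log (Fintype.card α) := by
        rw [Real.log_inv]
        simp [← Finset.sum_mul, hp.2]

lemma entropy_pushfwd_le (f : α → β) {p : α → ℝ} (hp : IsPMF p) :
    entropy (pushfwd f p) ≤ entropy p := by
  unfold entropy
  rw [neg_le_neg_iff, ← sum_mul_comp]
  refine Finset.sum_le_sum fun a _ => ?_
  rcases eq_or_lt_of_le (hp.1 a) with h0 | h0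
  · simp [← h0]
  · refine mul_le_mul_of_nonneg_left (Real.log_le_log h0 (le_pushfwd hp.1 a)) h0.le

lemma entropy_le_pushfwd_fst (p : α × γ → ℝ) (hp : IsPMF p) :
    entropy p ≤ entropy (pushfwd Prod.fst p) + Real.log (Fintype.card γ) := by
  have hne : Nonempty γ := by
    by_contra h
    rw [not_nonempty_iff] at h
    have : IsEmpty (α × γ) := inferInstance
    have h2 := hp.2
    rw [Finset.sum_eq_zero (fun a _ => ((this.false a).elim))] at h2
    norm_num at h2
  have hcard : (0:ℝ) < Fintype.card γ := by
    have := Fintype.card_pos_iff.2 hne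
    exact_mod_cast this
  set pf := pushfwd (Prod.fst : α × γ → α) p with hpf
  have hpf0 : ∀ a, 0 ≤ pf a := pushfwd_nonneg hp.1
  have key := gibbs hp (q := fun x => pf x.1 / Fintype.card γ)
    (fun x => by have := hpf0 x.1; positivity)
    (by
      rw [Fintype.sum_prod_type]
      have : ∀ a : α, ∑ _c : γ, pf a / (Fintype.card γ : ℝ) = pf a := by
        intro a
        rw [Finset.sum_const]
        simp only [Finset.card_univ, nsmul_eq_mul]
        field_simp
      rw [Finset.sum_congr rfl (fun a _ => this a)]
      rw [(isPMF_pushfwd _ hp).2])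
    (fun x hx => by
      have h1 : p x ≤ pf x.1 := le_pushfwd hp.1 x
      have : 0 < pf x.1 := lt_of_lt_of_le hx h1
      positivity)
  refine le_trans key ?_
  have heq : ∀ x : α × γ, p x * Real.log (pf x.1 / Fintype.card γ)
      = p x * Real.log (pf x.1) - p x * Real.log (Fintype.card γ) := by
    intro x
    rcases eq_or_lt_of_le (hp.1 x) with h0 | h0
    · simp [← h0]
    · have hpos : 0 < pf x.1 := lt_of_lt_of_le h0 (le_pushfwd hp.1 x)
      rw [Real.log_div (ne_of_gt hpos) (ne_of_gt hcard), mul_sub]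
  rw [Finset.sum_congr rfl (fun x _ => heq x), Finset.sum_sub_distrib]
  rw [← Finset.sum_mul, hp.2, one_mul]
  have : ∑ x : α × γ, p x * Real.log (pf x.1) = ∑ b, pf b * Real.log (pf b) :=
    sum_mul_comp Prod.fst p (fun b => Real.log (pf b))
  rw [this]
  unfold entropy
  linarith

lemma entropy_comp_equiv {e : β ≃ α} (p : α → ℝ) : entropy (p ∘ e) = entropy p := by
  unfold entropy
  congr 1
  exact Equiv.sum_comp e (fun a => p a * Real.log (p a))

lemma pushfwd_equiv (e : α ≃ β) (p : α → ℝ) : pushfwd (⇑e) p = p ∘ e.symm := by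
  funext b
  unfold pushfwd
  rw [Finset.sum_eq_single (e.symm b)]
  · simp
  · intro a _ ha
    rw [if_neg]
    intro h
    exact ha (by simp [← h])
  · intro h
    exact absurd (Finset.mem_univ _) h

lemma entropy_pushfwd_equiv (e : α ≃ β) (p : α → ℝ) :
    entropy (pushfwd (⇑e) p) = entropy p := by
  rw [pushfwd_equiv]
  exact entropy_comp_equiv (e := e.symm) p

end pushfwd

section marginlayer
variable {d N : ℕ}

def restr (S : Finset (Fin N)) : (Fin N → Fin d) → ({ i // i ∈ S } → Fin d) :=
  fun x i => x i.1

lemma margin_eq_pushfwd (μ : (Fin N → Fin d) → ℝ) (S : Finset (Fin N)) :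
    margin μ S = pushfwd (restr S) μ := by
  funext y
  unfold margin pushfwd restr
  refine Finset.sum_congr rfl fun x _ => ?_
  congr 1
  simp [funext_iff]

def restr2 {S T : Finset (Fin N)} (h : S ⊆ T) :
    ({ i // i ∈ T } → Fin d) → ({ i // i ∈ S } → Fin d) :=
  fun y i => y ⟨i.1, h i.2⟩

lemma margin_margin {S T : Finset (Fin N)} (h : S ⊆ T) (μ : (Fin N → Fin d) → ℝ) :
    margin μ S = pushfwd (restr2 h) (margin μ T) := by
  rw [margin_eq_pushfwd, margin_eq_pushfwd, pushfwd_comp]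
  rfl

lemma isPMF_margin {μ : (Fin N → Fin d) → ℝ} (hμ : IsPMF μ) (S : Finset (Fin N)) :
    IsPMF (margin μ S) := by
  rw [margin_eq_pushfwd]; exact isPMF_pushfwd _ hμ

lemma entropy_margin_le_entropy {μ : (Fin N → Fin d) → ℝ} (hμ : IsPMF μ) (S : Finset (Fin N)) :
    entropy (margin μ S) ≤ entropy μ := by
  rw [margin_eq_pushfwd]; exact entropy_pushfwd_le _ hμ

lemma entropy_margin_mono {μ : (Fin N → Fin d) → ℝ} (hμ : IsPMF μ) {S T : Finset (Fin N)}
    (h : S ⊆ T) : entropy (margin μ S) ≤ entropy (margin μ T) := by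
  rw [margin_margin h μ]
  exact entropy_pushfwd_le _ (isPMF_margin hμ T)

lemma entropy_margin_le_card (hd : 1 ≤ d) {μ : (Fin N → Fin d) → ℝ} (hμ : IsPMF μ)
    (S : Finset (Fin N)) : entropy (margin μ S) ≤ S.card * Real.log d := by
  have := entropy_le_log_card (isPMF_margin hμ S)
  rw [Fintype.card_fun, Fintype.card_coe, Fintype.card_fin, Nat.cast_pow, Real.log_pow] at this
  exact this

lemma entropy_margin_nonneg {μ : (Fin N → Fin d) → ℝ} (hμ : IsPMF μ) (S : Finset (Fin N)) :
    0 ≤ entropy (margin μ S) := entropy_nonneg (isPMF_margin hμ S)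

lemma entropy_margin_empty {μ : (Fin N → Fin d) → ℝ} (hμ : IsPMF μ) :
    entropy (margin μ (∅ : Finset (Fin N))) = 0 := by
  refine le_antisymm ?_ (entropy_margin_nonneg hμ ∅)
  have := entropy_le_log_card (isPMF_margin hμ ∅)
  rw [Fintype.card_fun, Fintype.card_coe, Fintype.card_fin] at this
  simpa using this

def univEquiv : ({ i // i ∈ (Finset.univ : Finset (Fin N)) } → Fin d) ≃ (Fin N → Fin d) where
  toFun y i := y ⟨i, Finset.mem_univ i⟩
  invFun x j := x j.1
  left_inv y := rfl
  right_inv x := rfl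

lemma entropy_margin_univ {μ : (Fin N → Fin d) → ℝ} :
    entropy (margin μ (Finset.univ : Finset (Fin N))) = entropy μ := by
  rw [margin_eq_pushfwd]
  have : restr (Finset.univ : Finset (Fin N)) = ⇑(univEquiv (d := d) (N := N)).symm := rfl
  rw [this, pushfwd_equiv]
  exact entropy_comp_equiv (e := univEquiv (d := d) (N := N)) μ

def splitEquiv {S T : Finset (Fin N)} (h : S ⊆ T) :
    ({ i // i ∈ T } → Fin d) ≃ ({ i // i ∈ S } → Fin d) × ({ i // i ∈ T \ S } → Fin d) where
  toFun y := (fun i => y ⟨i.1, h i.2⟩, fun i => y ⟨i.1, (Finset.mem_sdiff.1 i.2).1⟩)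
  invFun z i := if hs : i.1 ∈ S then z.1 ⟨i.1, hs⟩
    else z.2 ⟨i.1, Finset.mem_sdiff.2 ⟨i.2, hs⟩⟩
  left_inv y := by
    funext i
    dsimp only
    split <;> rfl
  right_inv z := by
    ext i
    · dsimp only
      rw [dif_pos i.2]
    · dsimp only
      rw [dif_neg (Finset.mem_sdiff.1 i.2).2]

lemma entropy_margin_le_add (hd : 1 ≤ d) {μ : (Fin N → Fin d) → ℝ} (hμ : IsPMF μ)
    {S T : Finset (Fin N)} (h : S ⊆ T) :
    entropy (margin μ T) ≤ entropy (margin μ S) + (T.card - S.card : ℕ) * Real.log d := by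
  have hTm : IsPMF (margin μ T) := isPMF_margin hμ T
  have h1 : entropy (margin μ T) = entropy (pushfwd (⇑(splitEquiv (d := d) h)) (margin μ T)) :=
    (entropy_pushfwd_equiv (splitEquiv (d := d) h) (margin μ T)).symm
  have h2 := entropy_le_pushfwd_fst (pushfwd (⇑(splitEquiv (d := d) h)) (margin μ T))
    (isPMF_pushfwd _ hTm)
  have h3 : pushfwd Prod.fst (pushfwd (⇑(splitEquiv (d := d) h)) (margin μ T)) = margin μ S := by
    rw [pushfwd_comp, margin_margin h μ]
    congr 1
  rw [h3] at h2
  rw [h1]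
  refine le_trans h2 ?_
  rw [Fintype.card_fun, Fintype.card_coe, Fintype.card_fin, Nat.cast_pow, Real.log_pow,
    Finset.card_sdiff_of_subset h]

end marginlayer

section avglayer
open Finset
variable {d N : ℕ}

lemma card_superset_filter {S : Finset (Fin N)} {k : ℕ} (hS : S.card = k) :
    (Finset.filter (fun T => S ⊆ T) (powersetCard (k+1) (univ : Finset (Fin N)))).card
      = N - k := by
  have : (Sᶜ : Finset (Fin N)).card = N - k := by
    rw [Finset.card_compl, Fintype.card_fin, hS]
  rw [← this]
  refine (Finset.card_bij (fun j _ => insert j S) ?_ ?_ ?_).symm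
  · intro j hj
    rw [Finset.mem_filter, Finset.mem_powersetCard]
    refine ⟨⟨Finset.subset_univ _, ?_⟩, Finset.subset_insert _ _⟩
    rw [Finset.card_insert_of_notMem (Finset.mem_compl.1 hj), hS]
  · intro j1 hj1 j2 hj2 hins
    have hins' : insert j1 S = insert j2 S := hins
    have : j1 ∈ insert j2 S := by rw [← hins']; exact Finset.mem_insert_self j1 S
    rcases Finset.mem_insert.1 this with h | h
    · exact h
    · exact absurd h (Finset.mem_compl.1 hj1)
  · intro T hT
    rw [Finset.mem_filter, Finset.mem_powersetCard] at hT
    obtain ⟨⟨_, hTc⟩, hST⟩ := hT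
    have hlt : S.card < T.card := by omega
    have : (T \ S).Nonempty := by
      rw [← Finset.card_pos, Finset.card_sdiff_of_subset hST]
      omega
    obtain ⟨j, hj⟩ := this
    rw [Finset.mem_sdiff] at hj
    refine ⟨j, Finset.mem_compl.2 hj.2, ?_⟩
    refine Finset.eq_of_subset_of_card_le ?_ ?_
    · exact Finset.insert_subset hj.1 hST
    · rw [Finset.card_insert_of_notMem hj.2, hS]
      omega

lemma double_count (F : Finset (Fin N) → ℝ) (k : ℕ) :
    ∑ T ∈ powersetCard (k+1) (univ : Finset (Fin N)), ∑ S ∈ powersetCard k T, F S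
      = (N - k : ℕ) * ∑ S ∈ powersetCard k (univ : Finset (Fin N)), F S := by
  rw [Finset.sum_comm' (s' := fun S => Finset.filter (fun T => S ⊆ T)
      (powersetCard (k+1) (univ : Finset (Fin N))))
      (t' := powersetCard k (univ : Finset (Fin N)))]
  · rw [Finset.mul_sum]
    refine Finset.sum_congr rfl fun S hS => ?_
    rw [Finset.sum_const]
    rw [Finset.mem_powersetCard] at hS
    rw [card_superset_filter hS.2, nsmul_eq_mul]
  · intro T S
    simp only [Finset.mem_powersetCard, Finset.mem_filter]
    constructor
    · rintro ⟨⟨hTu, hTc⟩, hST, hSc⟩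
      exact ⟨⟨⟨hTu, hTc⟩, hST⟩, Finset.subset_univ _, hSc⟩
    · rintro ⟨⟨⟨hTu, hTc⟩, hST⟩, _, hSc⟩
      exact ⟨⟨hTu, hTc⟩, hST, hSc⟩

lemma avgEntropy_zero {μ : (Fin N → Fin d) → ℝ} (hμ : IsPMF μ) : avgEntropy μ 0 = 0 := by
  unfold avgEntropy
  rw [Finset.powersetCard_zero]
  simp [entropy_margin_empty hμ]

lemma avgEntropy_N {μ : (Fin N → Fin d) → ℝ} : avgEntropy (N := N) μ N = entropy μ := by
  unfold avgEntropy
  have h1 : Finset.powersetCard N (univ : Finset (Fin N)) = {univ} := by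
    have := Finset.powersetCard_self (univ : Finset (Fin N))
    rwa [Finset.card_univ, Fintype.card_fin] at this
  rw [h1]
  simp [entropy_margin_univ, Nat.choose_self]

lemma avgEntropy_nonneg {μ : (Fin N → Fin d) → ℝ} (hμ : IsPMF μ) (k : ℕ) :
    0 ≤ avgEntropy μ k := by
  unfold avgEntropy
  refine mul_nonneg (by positivity) ?_
  exact Finset.sum_nonneg fun S _ => entropy_margin_nonneg hμ S

lemma avgEntropy_le_card (hd : 1 ≤ d) {μ : (Fin N → Fin d) → ℝ} (hμ : IsPMF μ) {k : ℕ} (hk : k ≤ N) :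
    avgEntropy μ k ≤ k * Real.log d := by
  unfold avgEntropy
  have hchoose : (0:ℝ) < (N.choose k : ℝ) := by
    exact_mod_cast Nat.choose_pos hk
  have hsum : ∑ S ∈ powersetCard k (univ : Finset (Fin N)), entropy (margin μ S)
      ≤ ∑ S ∈ powersetCard k (univ : Finset (Fin N)), (k : ℝ) * Real.log d := by
    refine Finset.sum_le_sum fun S hS => ?_
    rw [Finset.mem_powersetCard] at hS
    have := entropy_margin_le_card hd hμ S
    rw [hS.2] at this
    exact this
  rw [Finset.sum_const, Finset.card_powersetCard, Finset.card_univ, Fintype.card_fin,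
    nsmul_eq_mul] at hsum
  rw [one_div]
  calc (N.choose k : ℝ)⁻¹ * ∑ S ∈ powersetCard k (univ : Finset (Fin N)), entropy (margin μ S)
      ≤ (N.choose k : ℝ)⁻¹ * ((N.choose k : ℝ) * ((k:ℝ) * Real.log d)) := by
        refine mul_le_mul_of_nonneg_left hsum (by positivity)
    _ = (k:ℝ) * Real.log d := by field_simp

lemma avgEntropy_le_entropy {μ : (Fin N → Fin d) → ℝ} (hμ : IsPMF μ) {k : ℕ} (hk : k ≤ N) :
    avgEntropy μ k ≤ entropy μ := by
  unfold avgEntropy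
  have hchoose : (0:ℝ) < (N.choose k : ℝ) := by exact_mod_cast Nat.choose_pos hk
  have hsum : ∑ S ∈ powersetCard k (univ : Finset (Fin N)), entropy (margin μ S)
      ≤ ∑ S ∈ powersetCard k (univ : Finset (Fin N)), entropy μ :=
    Finset.sum_le_sum fun S _ => entropy_margin_le_entropy hμ S
  rw [Finset.sum_const, Finset.card_powersetCard, Finset.card_univ, Fintype.card_fin,
    nsmul_eq_mul] at hsum
  rw [one_div]
  calc (N.choose k : ℝ)⁻¹ * ∑ S ∈ powersetCard k (univ : Finset (Fin N)), entropy (margin μ S)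
      ≤ (N.choose k : ℝ)⁻¹ * ((N.choose k : ℝ) * entropy μ) := by
        refine mul_le_mul_of_nonneg_left hsum (by positivity)
    _ = entropy μ := by field_simp

lemma choose_identity (hk : k < N) :
    ((N.choose (k+1) : ℝ)) * (k+1) = (N.choose k : ℝ) * (N - k : ℕ) := by
  exact_mod_cast congrArg (Nat.cast : ℕ → ℝ) (Nat.choose_succ_right_eq N k)

lemma avgEntropy_mono {μ : (Fin N → Fin d) → ℝ} (hμ : IsPMF μ) {k : ℕ} (hk : k < N) :
    avgEntropy μ k ≤ avgEntropy μ (k+1) := by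
  have hdc := double_count (fun S => entropy (margin μ S)) k
  have hkey : ∑ T ∈ powersetCard (k+1) (univ : Finset (Fin N)), ∑ S ∈ powersetCard k T,
      entropy (margin μ S)
      ≤ ∑ T ∈ powersetCard (k+1) (univ : Finset (Fin N)), (k+1 : ℝ) * entropy (margin μ T) := by
    refine Finset.sum_le_sum fun T hT => ?_
    rw [Finset.mem_powersetCard] at hT
    have hcard : (powersetCard k T).card = k + 1 := by
      rw [Finset.card_powersetCard, hT.2, Nat.choose_succ_self_right]
    calc ∑ S ∈ powersetCard k T, entropy (margin μ S)
        ≤ ∑ S ∈ powersetCard k T, entropy (margin μ T) := by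
          refine Finset.sum_le_sum fun S hS => ?_
          rw [Finset.mem_powersetCard] at hS
          exact entropy_margin_mono hμ hS.1
      _ = (k+1 : ℝ) * entropy (margin μ T) := by
          rw [Finset.sum_const, hcard, nsmul_eq_mul]; push_cast; ring
  rw [hdc, ← Finset.mul_sum] at hkey
  -- hkey : (N-k) * Σ_k ≤ (k+1) * Σ_{k+1}
  unfold avgEntropy
  set A := ∑ S ∈ powersetCard k (univ : Finset (Fin N)), entropy (margin μ S) with hA
  set B := ∑ S ∈ powersetCard (k+1) (univ : Finset (Fin N)), entropy (margin μ S) with hB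
  have hc1 : (0:ℝ) < (N.choose k : ℝ) := by exact_mod_cast Nat.choose_pos (le_of_lt hk)
  have hc2 : (0:ℝ) < (N.choose (k+1) : ℝ) := by exact_mod_cast Nat.choose_pos hk
  have hNk : (0:ℝ) < ((N - k : ℕ) : ℝ) := by
    have : 0 < N - k := by omega
    exact_mod_cast this
  have hid := choose_identity hk
  rw [one_div_mul_eq_div, one_div_mul_eq_div, div_le_div_iff₀ hc1 hc2]
  have hk1 : (0:ℝ) < (k:ℝ)+1 := by positivity
  refine le_of_mul_le_mul_right ?_ hk1
  calc A * (N.choose (k+1):ℝ) * ((k:ℝ)+1)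
      = ((N-k:ℕ):ℝ) * A * (N.choose k:ℝ) := by linear_combination A * hid
    _ ≤ ((k:ℝ)+1) * B * (N.choose k:ℝ) := mul_le_mul_of_nonneg_right hkey hc1.le
    _ = B * (N.choose k:ℝ) * ((k:ℝ)+1) := by ring

lemma avgEntropy_lip (hd : 1 ≤ d) {μ : (Fin N → Fin d) → ℝ} (hμ : IsPMF μ) {k : ℕ}
    (hk : k < N) : avgEntropy μ (k+1) ≤ avgEntropy μ k + Real.log d := by
  have hdc := double_count (fun S => entropy (margin μ S)) k
  have hkey : ∑ T ∈ powersetCard (k+1) (univ : Finset (Fin N)),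
        ((k:ℝ)+1) * entropy (margin μ T)
      ≤ ∑ T ∈ powersetCard (k+1) (univ : Finset (Fin N)),
        ((∑ S ∈ powersetCard k T, entropy (margin μ S)) + ((k:ℝ)+1) * Real.log d) := by
    refine Finset.sum_le_sum fun T hT => ?_
    rw [Finset.mem_powersetCard] at hT
    have hcard : (powersetCard k T).card = k + 1 := by
      rw [Finset.card_powersetCard, hT.2, Nat.choose_succ_self_right]
    have hstep : ∀ S ∈ powersetCard k T, entropy (margin μ T)
        ≤ entropy (margin μ S) + Real.log d := by
      intro S hS
      rw [Finset.mem_powersetCard] at hS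
      have := entropy_margin_le_add hd hμ hS.1
      rw [hT.2, hS.2] at this
      simpa using this
    calc ((k:ℝ)+1) * entropy (margin μ T)
        = ∑ _S ∈ powersetCard k T, entropy (margin μ T) := by
          rw [Finset.sum_const, hcard, nsmul_eq_mul]; push_cast; ring
      _ ≤ ∑ S ∈ powersetCard k T, (entropy (margin μ S) + Real.log d) :=
          Finset.sum_le_sum hstep
      _ = (∑ S ∈ powersetCard k T, entropy (margin μ S)) + ((k:ℝ)+1) * Real.log d := by
          rw [Finset.sum_add_distrib, Finset.sum_const, hcard, nsmul_eq_mul]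
          push_cast; ring
  rw [← Finset.mul_sum, Finset.sum_add_distrib, hdc, Finset.sum_const, nsmul_eq_mul,
    Finset.card_powersetCard, Finset.card_univ, Fintype.card_fin] at hkey
  unfold avgEntropy
  set A := ∑ S ∈ powersetCard k (univ : Finset (Fin N)), entropy (margin μ S) with hA
  set B := ∑ S ∈ powersetCard (k+1) (univ : Finset (Fin N)), entropy (margin μ S) with hB
  have hc1 : (0:ℝ) < (N.choose k : ℝ) := by exact_mod_cast Nat.choose_pos (le_of_lt hk)
  have hc2 : (0:ℝ) < (N.choose (k+1) : ℝ) := by exact_mod_cast Nat.choose_pos hk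
  have hid := choose_identity hk
  rw [one_div_mul_eq_div, one_div_mul_eq_div]
  rw [div_add' _ _ _ (ne_of_gt hc1), div_le_div_iff₀ hc2 hc1]
  have hk1 : (0:ℝ) < (k:ℝ)+1 := by positivity
  refine le_of_mul_le_mul_right ?_ hk1
  calc B * (N.choose k:ℝ) * ((k:ℝ)+1) = (((k:ℝ)+1) * B) * (N.choose k:ℝ) := by ring
    _ ≤ (((N-k:ℕ):ℝ) * A + (N.choose (k+1):ℝ) * (((k:ℝ)+1) * Real.log d)) * (N.choose k:ℝ) :=
        mul_le_mul_of_nonneg_right hkey hc1.le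
    _ = (A + Real.log d * (N.choose k:ℝ)) * (N.choose (k+1):ℝ) * ((k:ℝ)+1) := by
        linear_combination (-A) * hid

lemma compl_sum (μ : (Fin N → Fin d) → ℝ) {j : ℕ} (hj : j ≤ N) :
    ∑ S ∈ powersetCard j (univ : Finset (Fin N)), entropy (margin μ Sᶜ)
      = ∑ T ∈ powersetCard (N - j) (univ : Finset (Fin N)), entropy (margin μ T) := by
  refine Finset.sum_bij' (fun S _ => Sᶜ) (fun T _ => Tᶜ) ?_ ?_ ?_ ?_ ?_
  · intro S hS
    rw [Finset.mem_powersetCard] at hS ⊢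
    exact ⟨Finset.subset_univ _, by rw [Finset.card_compl, Fintype.card_fin, hS.2]⟩
  · intro T hT
    rw [Finset.mem_powersetCard] at hT ⊢
    refine ⟨Finset.subset_univ _, ?_⟩
    rw [Finset.card_compl, Fintype.card_fin, hT.2]
    omega
  · intro S _; exact compl_compl S
  · intro T _; exact compl_compl T
  · intro S _; rfl

lemma neural_eq {μ : (Fin N → Fin d) → ℝ} (hμ : IsPMF μ) :
    neural μ = (1 / (N + 1 : ℝ)) * (2 * ∑ k ∈ Finset.range (N+1), avgEntropy μ k)
      - entropy μ := by
  unfold neural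
  have h0 : ∑ S : Finset (Fin N), (1 / (N.choose S.card : ℝ)) * MIS μ S
      = ∑ S ∈ (univ : Finset (Fin N)).powerset, (1 / (N.choose S.card : ℝ)) * MIS μ S := by
    rw [Finset.powerset_univ]
  rw [h0, Finset.sum_powerset, Finset.card_univ, Fintype.card_fin]
  have h1 : ∀ j ∈ Finset.range (N+1),
      ∑ S ∈ powersetCard j (univ : Finset (Fin N)), (1 / (N.choose S.card : ℝ)) * MIS μ S
        = avgEntropy μ j + avgEntropy μ (N - j) - entropy μ := by
    intro j hj
    rw [Finset.mem_range] at hj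
    have hjN : j ≤ N := by omega
    have hcj : (0:ℝ) < (N.choose j : ℝ) := by exact_mod_cast Nat.choose_pos hjN
    have e1 : ∀ S ∈ powersetCard j (univ : Finset (Fin N)),
        (1 / (N.choose S.card : ℝ)) * MIS μ S
          = (1 / (N.choose j : ℝ)) * (entropy (margin μ S) + entropy (margin μ Sᶜ)
              - entropy μ) := by
      intro S hS
      rw [Finset.mem_powersetCard] at hS
      rw [hS.2]
      rfl
    rw [Finset.sum_congr rfl e1, ← Finset.mul_sum]
    have e2 : ∑ S ∈ powersetCard j (univ : Finset (Fin N)),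
        (entropy (margin μ S) + entropy (margin μ Sᶜ) - entropy μ)
        = (∑ S ∈ powersetCard j (univ : Finset (Fin N)), entropy (margin μ S))
          + (∑ T ∈ powersetCard (N-j) (univ : Finset (Fin N)), entropy (margin μ T))
          - (N.choose j : ℝ) * entropy μ := by
      rw [Finset.sum_sub_distrib, Finset.sum_add_distrib, compl_sum μ hjN, Finset.sum_const,
        Finset.card_powersetCard, Finset.card_univ, Fintype.card_fin, nsmul_eq_mul]
    rw [e2]
    unfold avgEntropy
    have hsymm : (N.choose (N - j) : ℝ) = (N.choose j : ℝ) := by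
      exact_mod_cast congrArg (Nat.cast : ℕ → ℝ) (Nat.choose_symm hjN)
    rw [hsymm]
    field_simp
  rw [Finset.sum_congr rfl h1]
  rw [Finset.sum_sub_distrib, Finset.sum_add_distrib]
  have h2 : ∑ j ∈ Finset.range (N+1), avgEntropy μ (N - j)
      = ∑ j ∈ Finset.range (N+1), avgEntropy μ j := by
    have := Finset.sum_range_reflect (fun j => avgEntropy (d := d) μ j) (N+1)
    simpa using this
  rw [h2, Finset.sum_const, Finset.card_range, nsmul_eq_mul]
  have hN1 : ((N:ℝ)+1) ≠ 0 := by positivity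
  field_simp
  push_cast; ring
end avglayer
section discrete
open Finset

lemma sum_min_bounds (N : ℕ) (hN : 1 ≤ N) (y : ℝ) (hy0 : 0 ≤ y) (hy1 : y ≤ 1) :
    (N:ℝ) * y - (N:ℝ) * y^2/2 ≤ (∑ k ∈ Finset.range (N+1), min ((k:ℝ)/N) y) ∧
    (∑ k ∈ Finset.range (N+1), min ((k:ℝ)/N) y) ≤ (N:ℝ) * y - (N:ℝ) * y^2/2 + 1 := by
  have hN0 : (0:ℝ) < N := by exact_mod_cast hN
  set K := ⌊(N:ℝ)*y⌋₊ with hK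
  have hKle : (K:ℝ) ≤ (N:ℝ)*y := Nat.floor_le (by positivity)
  have hKlt : (N:ℝ)*y < (K:ℝ) + 1 := Nat.lt_floor_add_one _
  have hKN : K ≤ N := by
    have : (K:ℝ) ≤ (N:ℝ) := le_trans hKle (by nlinarith)
    exact_mod_cast this
  have hsplit : (∑ k ∈ Finset.range (N+1), min ((k:ℝ)/N) y)
      = (∑ k ∈ Finset.Ico 0 (K+1), min ((k:ℝ)/N) y)
        + (∑ k ∈ Finset.Ico (K+1) (N+1), min ((k:ℝ)/N) y) := by
    rw [Finset.sum_Ico_consecutive _ (by omega) (by omega), Finset.range_eq_Ico]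
  have h1 : (∑ k ∈ Finset.Ico 0 (K+1), min ((k:ℝ)/N) y)
      = (K:ℝ)*((K:ℝ)+1)/2/N := by
    have : ∀ k ∈ Finset.Ico 0 (K+1), min ((k:ℝ)/N) y = (k:ℝ)/N := by
      intro k hk
      rw [Finset.mem_Ico] at hk
      refine min_eq_left ?_
      rw [div_le_iff₀ hN0]
      have hkK : (k:ℝ) ≤ (K:ℝ) := by exact_mod_cast Nat.lt_succ_iff.1 hk.2
      linarith [hKle]
    rw [Finset.sum_congr rfl this, ← Finset.range_eq_Ico, ← Finset.sum_div]
    have hg : (∑ k ∈ Finset.range (K+1), (k:ℝ)) = (K:ℝ)*((K:ℝ)+1)/2 := by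
      have := Finset.sum_range_id_mul_two (K+1)
      have hc : ((∑ i ∈ Finset.range (K+1), i : ℕ) : ℝ) * 2 = ((K+1) * K : ℕ) := by
        exact_mod_cast congrArg (Nat.cast : ℕ → ℝ) this
      push_cast at hc
      push_cast
      linarith
    rw [hg]
  have h2 : (∑ k ∈ Finset.Ico (K+1) (N+1), min ((k:ℝ)/N) y) = ((N:ℝ) - K) * y := by
    have : ∀ k ∈ Finset.Ico (K+1) (N+1), min ((k:ℝ)/N) y = y := by
      intro k hk
      rw [Finset.mem_Ico] at hk
      refine min_eq_right ?_
      rw [le_div_iff₀ hN0]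
      have : (K:ℝ)+1 ≤ (k:ℝ) := by exact_mod_cast hk.1
      nlinarith
    rw [Finset.sum_congr rfl this, Finset.sum_const, Nat.card_Ico, nsmul_eq_mul]
    have : ((N + 1 - (K+1) : ℕ):ℝ) = (N:ℝ) - K := by
      have : N + 1 - (K+1) = N - K := by omega
      rw [this, Nat.cast_sub hKN]
    rw [this]
  rw [hsplit, h1, h2]
  constructor
  · rw [div_div, ge_iff_le.symm]
    rw [ge_iff_le, ← sub_nonneg]
    have key : (K:ℝ)*((K:ℝ)+1)/(2*N) + ((N:ℝ) - K)*y - ((N:ℝ)*y - (N:ℝ)*y^2/2)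
        = (((K:ℝ) - (N:ℝ)*y)^2 + K) / (2*N) := by
      field_simp
      ring
    rw [key]
    positivity
  · rw [div_div, ← sub_nonneg]
    have key : ((N:ℝ)*y - (N:ℝ)*y^2/2 + 1) - ((K:ℝ)*((K:ℝ)+1)/(2*N) + ((N:ℝ) - K)*y)
        = (2*(N:ℝ) - (((K:ℝ) - (N:ℝ)*y)^2 + K)) / (2*N) := by
      field_simp
      ring
    rw [key]
    have hsq : ((K:ℝ) - (N:ℝ)*y)^2 ≤ 1 := by nlinarith
    have hKN' : (K:ℝ) ≤ N := by exact_mod_cast hKN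
    have : (0:ℝ) ≤ 2*(N:ℝ) - (((K:ℝ) - (N:ℝ)*y)^2 + K) := by nlinarith
    positivity

lemma window_fwd (N : ℕ) (hN : 1 ≤ N) (g : ℕ → ℝ) (hg0 : ∀ k ≤ N, 0 ≤ g k)
    (hlip : ∀ k < N, g k - 1/N ≤ g (k+1)) (j : ℕ) (hj2 : 2*j ≤ N) :
    (N:ℝ)/2 * min (g j) (1/2)^2 ≤ ∑ k ∈ Finset.range (N+1), g k := by
  have hN0 : (0:ℝ) < N := by exact_mod_cast hN
  set δ := min (g j) (1/2) with hδ
  have hδ0 : 0 ≤ δ := le_min (hg0 j (by omega)) (by norm_num)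
  have hδh : δ ≤ 1/2 := min_le_right _ _
  have hδg : δ ≤ g j := min_le_left _ _
  set K := ⌊(N:ℝ)*δ⌋₊ with hK
  have hKle : (K:ℝ) ≤ (N:ℝ)*δ := Nat.floor_le (by positivity)
  have hKlt : (N:ℝ)*δ < (K:ℝ) + 1 := Nat.lt_floor_add_one _
  have hjr : 2*(j:ℝ) ≤ (N:ℝ) := by exact_mod_cast hj2
  have hjKN : j + K ≤ N := by
    have h1 : (K:ℝ) ≤ (N:ℝ) - j := by nlinarith
    have : ((j + K : ℕ):ℝ) ≤ (N:ℝ) := by push_cast; linarith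
    exact_mod_cast this
  have hstep : ∀ i ≤ K, g j - (i:ℝ)/N ≤ g (j+i) := by
    intro i hi
    induction i with
    | zero => simp
    | succ n ih =>
      have h1 := ih (by omega)
      have h2 := hlip (j+n) (by omega)
      have : ((n:ℝ)+1)/N = (n:ℝ)/N + 1/N := by ring
      push_cast
      rw [this]
      have : j + (n+1) = (j + n) + 1 := by omega
      rw [this]
      linarith
  have hsub : ∑ k ∈ Finset.Icc j (j+K), g k ≤ ∑ k ∈ Finset.range (N+1), g k := by
    refine Finset.sum_le_sum_of_subset_of_nonneg ?_ ?_
    · intro k hk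
      rw [Finset.mem_Icc] at hk
      rw [Finset.mem_range]
      omega
    · intro k hk _
      rw [Finset.mem_range] at hk
      exact hg0 k (by omega)
  have hIcc : ∑ k ∈ Finset.Icc j (j+K), g k = ∑ i ∈ Finset.range (K+1), g (j+i) := by
    rw [← Finset.Ico_add_one_right_eq_Icc, Finset.sum_Ico_eq_sum_range]
    have h10 : j + K + 1 - j = K + 1 := by omega
    rw [h10]
  have hlower : ∑ i ∈ Finset.range (K+1), (δ - (i:ℝ)/N) ≤ ∑ i ∈ Finset.range (K+1), g (j+i) := by
    refine Finset.sum_le_sum fun i hi => ?_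
    rw [Finset.mem_range] at hi
    have := hstep i (by omega)
    linarith
  have hgauss : ∑ i ∈ Finset.range (K+1), (δ - (i:ℝ)/N)
      = ((K:ℝ)+1)*δ - (K:ℝ)*((K:ℝ)+1)/2/N := by
    rw [Finset.sum_sub_distrib, Finset.sum_const, Finset.card_range, nsmul_eq_mul,
      ← Finset.sum_div]
    have hg : (∑ k ∈ Finset.range (K+1), (k:ℝ)) = (K:ℝ)*((K:ℝ)+1)/2 := by
      have := Finset.sum_range_id_mul_two (K+1)
      have hc : ((∑ i ∈ Finset.range (K+1), i : ℕ) : ℝ) * 2 = ((K+1) * K : ℕ) := by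
        exact_mod_cast congrArg (Nat.cast : ℕ → ℝ) this
      push_cast at hc
      push_cast
      linarith
    rw [hg]
    push_cast
    ring
  have hfinal : (N:ℝ)/2 * δ^2 ≤ ((K:ℝ)+1)*δ - (K:ℝ)*((K:ℝ)+1)/2/N := by
    rw [div_div, ← sub_nonneg]
    have key : ((K:ℝ)+1)*δ - (K:ℝ)*((K:ℝ)+1)/(2*N) - (N:ℝ)/2*δ^2
        = ((N:ℝ)*δ - ((N:ℝ)*δ - K)*((N:ℝ)*δ - (K:ℝ) - 1)) / (2*N) := by
      field_simp
      ring
    rw [key]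
    have h1 : (0:ℝ) ≤ (N:ℝ)*δ - K := by linarith
    have h2 : (N:ℝ)*δ - (K:ℝ) - 1 ≤ 0 := by linarith
    have h3 : (0:ℝ) ≤ (N:ℝ)*δ := by positivity
    have : (0:ℝ) ≤ (N:ℝ)*δ - ((N:ℝ)*δ - K)*((N:ℝ)*δ - (K:ℝ) - 1) := by nlinarith
    positivity
  calc (N:ℝ)/2 * δ^2 ≤ ((K:ℝ)+1)*δ - (K:ℝ)*((K:ℝ)+1)/2/N := hfinal
    _ = ∑ i ∈ Finset.range (K+1), (δ - (i:ℝ)/N) := hgauss.symm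
    _ ≤ ∑ i ∈ Finset.range (K+1), g (j+i) := hlower
    _ = ∑ k ∈ Finset.Icc j (j+K), g k := hIcc.symm
    _ ≤ ∑ k ∈ Finset.range (N+1), g k := hsub

lemma window (N : ℕ) (hN : 1 ≤ N) (g : ℕ → ℝ) (hg0 : ∀ k ≤ N, 0 ≤ g k)
    (hlip : ∀ k < N, |g (k+1) - g k| ≤ 1/N) (j : ℕ) (hj : j ≤ N) :
    (N:ℝ)/2 * min (g j) (1/2)^2 ≤ ∑ k ∈ Finset.range (N+1), g k := by
  rcases le_or_gt (2*j) N with h | h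
  · exact window_fwd N hN g hg0
      (fun k hk => by have := abs_le.1 (hlip k hk); linarith [this.1]) j h
  · have hrefl : ∑ k ∈ Finset.range (N+1), g (N - k) = ∑ k ∈ Finset.range (N+1), g k := by
      have := Finset.sum_range_reflect g (N+1)
      simpa using this
    have := window_fwd N hN (fun k => g (N - k))
      (fun k hk => hg0 (N - k) (by omega))
      (fun k hk => by
        have hm : N - k - 1 < N := by omega
        have h2 := abs_le.1 (hlip (N - k - 1) hm)
        have he : N - k - 1 + 1 = N - k := by omega
        rw [he] at h2
        have he2 : N - (k+1) = N - k - 1 := by omega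
        try dsimp only
        rw [he2]
        linarith [h2.2])
      (N - j) (by omega)
    try dsimp only at this
    have hNj : N - (N - j) = j := by omega
    rw [hNj, hrefl] at this
    exact this

lemma deficit_bound (N : ℕ) (hN : 1 ≤ N) (a : ℕ → ℝ) (y : ℝ) (hy0 : 0 ≤ y) (hy1 : y ≤ 1)
    (ha0 : ∀ k ≤ N, 0 ≤ a k) (hak : ∀ k ≤ N, a k ≤ (k:ℝ)/N) (hay : ∀ k ≤ N, a k ≤ y)
    (hmono : ∀ k < N, a k ≤ a (k+1)) (hlip : ∀ k < N, a (k+1) ≤ a k + 1/N) :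
    0 ≤ (1/((N:ℝ)+1)) * ∑ k ∈ Finset.range (N+1), (min ((k:ℝ)/N) y - a k) ∧
    ∀ j ≤ N, min ((j:ℝ)/N) y - a j
      ≤ 4 * Real.sqrt ((1/((N:ℝ)+1)) * ∑ k ∈ Finset.range (N+1), (min ((k:ℝ)/N) y - a k)) := by
  have hN0 : (0:ℝ) < N := by exact_mod_cast hN
  set g : ℕ → ℝ := fun k => min ((k:ℝ)/N) y - a k with hgdef
  have hg0 : ∀ k ≤ N, 0 ≤ g k := by
    intro k hk
    have h := le_min (hak k hk) (hay k hk)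
    simp only [hgdef]
    linarith
  have hglip : ∀ k < N, |g (k+1) - g k| ≤ 1/N := by
    intro k hk
    have hdiv : (k:ℝ)/N ≤ ((k:ℝ)+1)/N := by gcongr; linarith
    have hm1 : min ((k:ℝ)/N) y ≤ min (((k:ℝ)+1)/N) y := min_le_min hdiv le_rfl
    have hm2 : min (((k:ℝ)+1)/N) y ≤ min ((k:ℝ)/N) y + 1/N := by
      have h1 : ((k:ℝ)+1)/N = (k:ℝ)/N + 1/N := by ring
      have h2 : min ((k:ℝ)/N + 1/N) y ≤ min ((k:ℝ)/N + 1/N) (y + 1/N) := by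
        refine min_le_min le_rfl ?_
        have : (0:ℝ) < 1/(N:ℝ) := by positivity
        linarith
      rw [min_add_add_right] at h2
      rw [h1]
      exact h2
    have ham := hmono k hk
    have hal := hlip k hk
    simp only [hgdef]
    push_cast
    rw [abs_le]
    constructor <;> [linarith; linarith]
  set E := (1/((N:ℝ)+1)) * ∑ k ∈ Finset.range (N+1), g k with hEdef
  have hsumg : ∑ k ∈ Finset.range (N+1), g k = ((N:ℝ)+1) * E := by
    rw [hEdef]
    field_simp
  have hE0 : 0 ≤ E := by
    refine mul_nonneg (by positivity) ?_
    refine Finset.sum_nonneg fun k hk => ?_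
    rw [Finset.mem_range] at hk
    exact hg0 k (by omega)
  refine ⟨hE0, ?_⟩
  intro j hj
  have hw := window N hN g hg0 hglip j hj
  rw [hsumg] at hw
  have hN1 : (1:ℝ) ≤ N := by exact_mod_cast hN
  have hsq : min (g j) (1/2)^2 ≤ 4 * E := by
    nlinarith [hw, hE0, hN0, mul_nonneg (sub_nonneg.2 hN1) hE0, sq_nonneg (min (g j) (1/2))]
  have hconc : g j ≤ 4 * Real.sqrt E := by
    rcases le_or_gt (g j) (1/2) with hc | hc
    · have hmin : min (g j) (1/2) = g j := min_eq_left hc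
      rw [hmin] at hsq
      have hgj0 : 0 ≤ g j := hg0 j hj
      have h5 : g j ≤ Real.sqrt (4*E) := by
        rw [Real.le_sqrt hgj0 (by positivity)]
        exact hsq
      have h6 : Real.sqrt (4*E) = 2 * Real.sqrt E := by
        rw [show (4:ℝ)*E = 2^2*E by ring, Real.sqrt_mul (by positivity),
          Real.sqrt_sq (by norm_num)]
      have h7 := Real.sqrt_nonneg E
      linarith
    · have hmin : min (g j) (1/2) = 1/2 := min_eq_right hc.le
      rw [hmin] at hsq
      have hsE : (1/4:ℝ) ≤ Real.sqrt E := by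
        have h8 : Real.sqrt (1/16) ≤ Real.sqrt E := Real.sqrt_le_sqrt (by linarith)
        rw [show (1/16:ℝ) = (1/4)^2 by norm_num, Real.sqrt_sq (by norm_num)] at h8
        exact h8
      have hgj1 : g j ≤ 1 := by
        have h9 := min_le_right ((j:ℝ)/N) y
        have ha := ha0 j hj
        simp only [hgdef]
        linarith
      linarith
  exact hconc

end discrete
section perN
open Finset

lemma min_lip (c x y : ℝ) : |min c y - min c x| ≤ |y - x| := by
  rw [abs_sub_le_iff]
  constructor
  · have h1 : min c y ≤ min (c + |y-x|) (x + |y-x|) :=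
      min_le_min (le_add_of_nonneg_right (abs_nonneg _)) (by linarith [le_abs_self (y-x)])
    rw [min_add_add_right] at h1
    linarith
  · have h1 : min c x ≤ min (c + |y-x|) (y + |y-x|) :=
      min_le_min (le_add_of_nonneg_right (abs_nonneg _)) (by linarith [neg_abs_le (y-x)])
    rw [min_add_add_right] at h1
    linarith

noncomputable def yN (d N : ℕ) (μ : (Fin N → Fin d) → ℝ) : ℝ :=
  entropy μ / ((N:ℝ) * Real.log d)

noncomputable def EE (d N : ℕ) (μ : (Fin N → Fin d) → ℝ) : ℝ :=
  (1/((N:ℝ)+1)) * ∑ k ∈ Finset.range (N+1), min ((k:ℝ)/N) (yN d N μ)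
    - (neural μ / ((N:ℝ) * Real.log d) + yN d N μ)/2

lemma profile_eval {d N : ℕ} (μ : (Fin N → Fin d) → ℝ) {t : ℝ} (ht : ¬ t ≤ 0) :
    profile μ t = (avgEntropy μ (⌈t * (N:ℝ)⌉.toNat - 1)
      + (t * (N:ℝ) - ((⌈t * (N:ℝ)⌉.toNat - 1 : ℕ) : ℝ)) *
        (avgEntropy μ ⌈t * (N:ℝ)⌉.toNat - avgEntropy μ (⌈t * (N:ℝ)⌉.toNat - 1)))
      / ((N:ℝ) * Real.log d) := by
  rw [profile, if_neg ht]

lemma perN_main (d N : ℕ) (hd : 2 ≤ d) (hN : 1 ≤ N) (μ : (Fin N → Fin d) → ℝ)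
    (hμ : IsPMF μ) :
    (0 ≤ yN d N μ ∧ yN d N μ ≤ 1) ∧ 0 ≤ EE d N μ ∧
    (neural μ / ((N:ℝ) * Real.log d) ≤ yN d N μ - (yN d N μ)^2 + 4/N) ∧
    (∀ x ∈ Set.Icc (0:ℝ) 1, ∀ t ∈ Set.Icc (0:ℝ) 1,
      |profile μ t - min x t| ≤ 4 * Real.sqrt (EE d N μ) + |yN d N μ - x| + 2/N) := by
  have hd1 : 1 ≤ d := by omega
  have hN0 : (0:ℝ) < N := by exact_mod_cast hN
  have hN1 : (1:ℝ) ≤ N := by exact_mod_cast hN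
  have hlog : (0:ℝ) < Real.log d := Real.log_pos (by exact_mod_cast hd)
  set L : ℝ := (N:ℝ) * Real.log d with hLdef
  have hL : (0:ℝ) < L := by positivity
  set a : ℕ → ℝ := fun k => avgEntropy μ k / L with hadef
  set y : ℝ := yN d N μ with hydef
  have hyeq : y = entropy μ / L := rfl
  have htot : entropy μ ≤ L := by
    have h := entropy_le_log_card hμ
    rw [Fintype.card_fun, Fintype.card_fin, Fintype.card_fin, Nat.cast_pow, Real.log_pow] at h
    exact h
  have hy0 : 0 ≤ y := by
    rw [hyeq]
    exact div_nonneg (entropy_nonneg hμ) hL.le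
  have hy1 : y ≤ 1 := by
    rw [hyeq, div_le_one hL]
    exact htot
  have ha0 : ∀ k ≤ N, 0 ≤ a k := fun k _ =>
    div_nonneg (avgEntropy_nonneg hμ k) hL.le
  have hak : ∀ k ≤ N, a k ≤ (k:ℝ)/N := by
    intro k hk
    have h := avgEntropy_le_card hd1 hμ hk
    have he : (k:ℝ)/N = ((k:ℝ) * Real.log d)/L := by
      rw [hLdef]; field_simp
    rw [he, hadef]
    dsimp only
    gcongr
  have hay : ∀ k ≤ N, a k ≤ y := by
    intro k hk
    rw [hyeq, hadef]
    dsimp only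
    gcongr
    exact avgEntropy_le_entropy hμ hk
  have hmono : ∀ k < N, a k ≤ a (k+1) := by
    intro k hk
    rw [hadef]
    dsimp only
    gcongr
    exact avgEntropy_mono hμ hk
  have hlip : ∀ k < N, a (k+1) ≤ a k + 1/N := by
    intro k hk
    have h := avgEntropy_lip hd1 hμ hk
    have he : a k + 1/N = (avgEntropy μ k + Real.log d)/L := by
      rw [hadef, hLdef]
      dsimp only
      field_simp
    rw [he, hadef]
    dsimp only
    gcongr
  have hIeq : neural μ / L = 2/((N:ℝ)+1) * (∑ k ∈ Finset.range (N+1), a k) - y := by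
    rw [neural_eq hμ, hyeq, hadef]
    dsimp only
    rw [← Finset.sum_div]
    have hN1' : ((N:ℝ)+1) ≠ 0 := by positivity
    field_simp
  have hEE : EE d N μ
      = (1/((N:ℝ)+1)) * ∑ k ∈ Finset.range (N+1), (min ((k:ℝ)/N) y - a k) := by
    rw [EE, Finset.sum_sub_distrib, mul_sub, ← hydef]
    have h2 : (neural μ / L + y)/2 = (1/((N:ℝ)+1)) * ∑ k ∈ Finset.range (N+1), a k := by
      rw [hIeq]; ring
    rw [← hLdef, h2]
  obtain ⟨hE0, hdev0⟩ := deficit_bound N hN a y hy0 hy1 ha0 hak hay hmono hlip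
  rw [← hEE] at hE0 hdev0
  have hsb := sum_min_bounds N hN y hy0 hy1
  clear_value a y L
  refine ⟨⟨hy0, hy1⟩, hE0, ?_, ?_⟩
  · -- neural upper bound
    have h1 : neural μ / L = 2 * ((1/((N:ℝ)+1)) * ∑ k ∈ Finset.range (N+1), min ((k:ℝ)/N) y
        - EE d N μ) - y := by
      rw [EE, ← hLdef, ← hydef]
      ring
    have hc0 : 0 ≤ y - y^2/2 := by nlinarith
    have h2 : (1/((N:ℝ)+1)) * ∑ k ∈ Finset.range (N+1), min ((k:ℝ)/N) y
        ≤ (y - y^2/2) + 1/N := by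
      have hub := hsb.2
      have e1 : (y - y^2/2) + 1/N = ((y - y^2/2)*N + 1)/N := by field_simp
      rw [one_div_mul_eq_div, e1, div_le_div_iff₀ (by positivity) hN0]
      nlinarith [mul_le_mul_of_nonneg_right hub hN0.le, hc0, hN0]
    rw [h1]
    calc 2 * ((1/((N:ℝ)+1)) * ∑ k ∈ Finset.range (N+1), min ((k:ℝ)/N) y - EE d N μ) - y
        ≤ 2 * (((y - y^2/2) + 1/N) - 0) - y := by
          refine sub_le_sub_right ?_ y
          exact mul_le_mul_of_nonneg_left (sub_le_sub h2 hE0) (by norm_num)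
      _ = y - y^2 + 2/N := by ring
      _ ≤ y - y^2 + 4/N := by
          have h9 : (2:ℝ)/N ≤ 4/N := by gcongr <;> norm_num
          linarith
  · -- profile bound
    intro x hx t ht
    obtain ⟨hx0, hx1⟩ := hx
    obtain ⟨ht0, ht1⟩ := ht
    have hRHS0 : 0 ≤ 4 * Real.sqrt (EE d N μ) + |y - x| + 2/N := by
      have := Real.sqrt_nonneg (EE d N μ)
      have := abs_nonneg (y - x)
      have : (0:ℝ) < 2/N := by positivity
      linarith [Real.sqrt_nonneg (EE d N μ), abs_nonneg (y - x)]
    rcases eq_or_lt_of_le ht0 with ht0' | ht0'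
    · -- t = 0
      have hpt : profile μ t = 0 := by
        rw [profile, if_pos (le_of_eq ht0'.symm)]
      have hmt : min x t = 0 := by
        rw [← ht0']
        exact min_eq_right hx0
      rw [hpt, hmt]
      simpa using hRHS0
    · -- t > 0
      have htN0 : 0 < t * N := by positivity
      obtain ⟨K, hKeq⟩ : ∃ K : ℕ, ⌈t * (N:ℝ)⌉.toNat = K := ⟨_, rfl⟩
      have hceil0 : (0:ℤ) < ⌈t * (N:ℝ)⌉ := Int.ceil_pos.2 htN0
      have hK1 : 1 ≤ K := by
        rw [← hKeq]
        omega
      have hceilN : ⌈t * (N:ℝ)⌉ ≤ (N:ℤ) := by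
        refine Int.ceil_le.2 ?_
        push_cast
        nlinarith
      have hKN : K ≤ N := by
        rw [← hKeq]
        omega
      have hKcast : ((K:ℕ):ℝ) = ((⌈t * (N:ℝ)⌉ : ℤ) : ℝ) := by
        rw [← hKeq]
        have h20 : (⌈t * (N:ℝ)⌉.toNat : ℤ) = ⌈t * (N:ℝ)⌉ := Int.toNat_of_nonneg hceil0.le
        exact_mod_cast congrArg (fun z : ℤ => (z:ℝ)) h20
      have hup : t * N ≤ (K:ℝ) := by
        rw [hKcast]
        exact Int.le_ceil _
      have hlo : (K:ℝ) - 1 < t * N := by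
        rw [hKcast]
        have := Int.ceil_lt_add_one (t * (N:ℝ))
        linarith
      have hKm1cast : ((K-1:ℕ):ℝ) = (K:ℝ) - 1 := by
        have : (1:ℕ) ≤ K := hK1
        push_cast [this]
        ring
      set θ : ℝ := t * N - ((K-1:ℕ):ℝ) with hθdef
      have hθ0 : 0 ≤ θ := by
        rw [hθdef, hKm1cast]
        linarith
      have hθ1 : θ ≤ 1 := by
        rw [hθdef, hKm1cast]
        linarith
      have hprof : profile μ t = (1-θ) * a (K-1) + θ * a K := by
        rw [profile_eval μ (not_le.2 ht0'), hKeq, hadef, ← hθdef, ← hLdef]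
        dsimp only
        field_simp [hL.ne']
        ring
      have hdev : ∀ i, i ≤ N → |a i - min x ((i:ℝ)/N)| ≤
          4 * Real.sqrt (EE d N μ) + |y - x| := by
        intro i hi
        have hg := hdev0 i hi
        have hbelow : a i ≤ min ((i:ℝ)/N) y := le_min (hak i hi) (hay i hi)
        have h1 := abs_sub_le (a i) (min ((i:ℝ)/N) y) (min ((i:ℝ)/N) x)
        have h2 : |a i - min ((i:ℝ)/N) y| = min ((i:ℝ)/N) y - a i := by
          rw [abs_sub_comm, abs_of_nonneg (by linarith only [hbelow])]
        have h3 : |min ((i:ℝ)/N) y - min ((i:ℝ)/N) x| ≤ |y - x| := min_lip _ x y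
        rw [min_comm x ((i:ℝ)/N)]
        linarith only [h1, h2, h3, hg]
      have hshift : ∀ i : ℕ, |((i:ℝ))/N - t| ≤ 1/N →
          |min x ((i:ℝ)/N) - min x t| ≤ 1/N := by
        intro i hi
        exact le_trans (min_lip x t ((i:ℝ)/N)) hi
      have hsh1 : |((K-1:ℕ):ℝ)/N - t| ≤ 1/N := by
        rw [hKm1cast]
        have he : ((K:ℝ)-1)/N - t = ((K:ℝ) - 1 - t*N)/N := by
          rw [sub_div ((K:ℝ)-1) (t*(N:ℝ)) (N:ℝ), mul_div_cancel_right₀ _ (ne_of_gt hN0)]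
        rw [he, abs_div, abs_of_pos hN0, div_le_div_iff_of_pos_right hN0, abs_le]
        constructor <;> linarith only [hup, hlo]
      have hsh2 : |((K:ℕ):ℝ)/N - t| ≤ 1/N := by
        have he : (K:ℝ)/N - t = ((K:ℝ) - t*N)/N := by
          rw [sub_div (K:ℝ) (t*(N:ℝ)) (N:ℝ), mul_div_cancel_right₀ _ (ne_of_gt hN0)]
        rw [he, abs_div, abs_of_pos hN0, div_le_div_iff_of_pos_right hN0, abs_le]
        constructor <;> linarith only [hup, hlo]
      have hterm : ∀ i : ℕ, i ≤ N → |((i:ℝ))/N - t| ≤ 1/N →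
          |a i - min x t| ≤ 4 * Real.sqrt (EE d N μ) + |y - x| + 1/N := by
        intro i hi hsh
        have h1 := abs_sub_le (a i) (min x ((i:ℝ)/N)) (min x t)
        have h2 := hdev i hi
        have h3 := hshift i hsh
        linarith only [h1, h2, h3]
      have hT1 := hterm (K-1) (by omega) hsh1
      have hT2 := hterm K hKN hsh2
      have hsplit : profile μ t - min x t
          = (1-θ) * (a (K-1) - min x t) + θ * (a K - min x t) := by
        rw [hprof]
        ring
      calc |profile μ t - min x t|
          = |(1-θ) * (a (K-1) - min x t) + θ * (a K - min x t)| := by rw [hsplit]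
        _ ≤ |(1-θ) * (a (K-1) - min x t)| + |θ * (a K - min x t)| := abs_add_le _ _
        _ = (1-θ) * |a (K-1) - min x t| + θ * |a K - min x t| := by
            rw [abs_mul, abs_mul, abs_of_nonneg (by linarith only [hθ1] : (0:ℝ) ≤ 1-θ),
              abs_of_nonneg hθ0]
        _ ≤ (1-θ) * (4 * Real.sqrt (EE d N μ) + |y - x| + 1/N)
            + θ * (4 * Real.sqrt (EE d N μ) + |y - x| + 1/N) := by
            refine add_le_add ?_ ?_
            · exact mul_le_mul_of_nonneg_left hT1 (by linarith only [hθ1])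
            · exact mul_le_mul_of_nonneg_left hT2 hθ0
        _ = 4 * Real.sqrt (EE d N μ) + |y - x| + 1/N := by ring
        _ ≤ 4 * Real.sqrt (EE d N μ) + |y - x| + 2/N := by
            have h30 : (1:ℝ)/N ≤ 2/N := by
              rw [div_le_div_iff_of_pos_right hN0]
              norm_num
            linarith only [h30]
end perN
section assembly
open Finset

lemma tendsto_const_div_atTop (c : ℝ) :
    Tendsto (fun n : ℕ => c/(n:ℝ)) atTop (nhds 0) := by
  have := tendsto_one_div_atTop_nhds_zero_nat.const_mul c
  simpa [mul_one_div, div_eq_mul_inv] using this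

lemma part1_main (d : ℕ) (hd : 2 ≤ d) (x : ℝ) (hx : x ∈ Set.Icc (0:ℝ) 1)
    (μ : (N : ℕ) → (Fin N → Fin d) → ℝ) (hμ : ∀ N, IsPMF (μ N))
    (hH : Tendsto (fun N : ℕ => entropy (μ N) / (N * Real.log d)) atTop (nhds x))
    (hI : Tendsto (fun N : ℕ => neural (μ N) / (N * Real.log d)) atTop (nhds (x * (1 - x)))) :
    Tendsto (fun N : ℕ => ⨆ t : Set.Icc (0:ℝ) 1, |profile (μ N) t - min x t|)
      atTop (nhds 0) := by
  have hH' : Tendsto (fun N : ℕ => yN d N (μ N)) atTop (nhds x) := hH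
  have h2N := tendsto_const_div_atTop 2
  have hφclose : ∀ᶠ N : ℕ in atTop,
      ‖(1/((N:ℝ)+1)) * (∑ k ∈ Finset.range (N+1), min ((k:ℝ)/N) (yN d N (μ N)))
        - (yN d N (μ N) - (yN d N (μ N))^2/2)‖ ≤ 2/(N:ℝ) := by
    filter_upwards [eventually_ge_atTop 1] with N hN
    obtain ⟨⟨hy0, hy1⟩, -, -, -⟩ := perN_main d N hd hN (μ N) (hμ N)
    have hsb := sum_min_bounds N hN (yN d N (μ N)) hy0 hy1
    have hN0 : (0:ℝ) < N := by exact_mod_cast hN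
    have hc0 : 0 ≤ yN d N (μ N) - (yN d N (μ N))^2/2 := by nlinarith
    have hc1 : yN d N (μ N) - (yN d N (μ N))^2/2 ≤ 1 := by nlinarith
    have he : (1/((N:ℝ)+1)) * (∑ k ∈ Finset.range (N+1), min ((k:ℝ)/N) (yN d N (μ N)))
          - (yN d N (μ N) - (yN d N (μ N))^2/2)
        = ((∑ k ∈ Finset.range (N+1), min ((k:ℝ)/N) (yN d N (μ N)))
          - ((N:ℝ)+1)*(yN d N (μ N) - (yN d N (μ N))^2/2))/((N:ℝ)+1) := by
      rw [sub_div, mul_div_cancel_left₀ _ (by positivity : ((N:ℝ)+1) ≠ 0),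
        one_div_mul_eq_div]
    rw [Real.norm_eq_abs, he, abs_div, abs_of_pos (by positivity : (0:ℝ) < (N:ℝ)+1)]
    have hnum : |(∑ k ∈ Finset.range (N+1), min ((k:ℝ)/N) (yN d N (μ N)))
        - ((N:ℝ)+1)*(yN d N (μ N) - (yN d N (μ N))^2/2)| ≤ 1 := by
      rw [abs_le]
      constructor
      · nlinarith [hsb.1]
      · nlinarith [hsb.2]
    calc |(∑ k ∈ Finset.range (N+1), min ((k:ℝ)/N) (yN d N (μ N)))
          - ((N:ℝ)+1)*(yN d N (μ N) - (yN d N (μ N))^2/2)|/((N:ℝ)+1)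
        ≤ 1/((N:ℝ)+1) := by
          rw [div_le_div_iff_of_pos_right (by positivity : (0:ℝ) < (N:ℝ)+1)]
          exact hnum
      _ ≤ 2/(N:ℝ) := by
          rw [div_le_div_iff₀ (by positivity) hN0]
          linarith
  have hclim : Tendsto (fun N : ℕ => yN d N (μ N) - (yN d N (μ N))^2/2) atTop
      (nhds (x - x^2/2)) := hH'.sub ((hH'.pow 2).div_const 2)
  have hdiff : Tendsto (fun N : ℕ =>
      (1/((N:ℝ)+1)) * (∑ k ∈ Finset.range (N+1), min ((k:ℝ)/N) (yN d N (μ N)))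
        - (yN d N (μ N) - (yN d N (μ N))^2/2)) atTop (nhds 0) :=
    squeeze_zero_norm' hφclose h2N
  have hφlim : Tendsto (fun N : ℕ =>
      (1/((N:ℝ)+1)) * (∑ k ∈ Finset.range (N+1), min ((k:ℝ)/N) (yN d N (μ N))))
      atTop (nhds (x - x^2/2)) := by
    have := hdiff.add hclim
    simpa using this
  have hEElim : Tendsto (fun N : ℕ => EE d N (μ N)) atTop (nhds 0) := by
    have h := hφlim.sub ((hI.add hH).div_const 2)
    have he : (x - x^2/2) - ((x*(1-x)) + x)/2 = 0 := by ring
    rw [he] at h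
    exact h
  have hs : Tendsto (fun N : ℕ => Real.sqrt (EE d N (μ N))) atTop (nhds 0) := by
    have := (Real.continuous_sqrt.tendsto 0).comp hEElim
    simpa [Function.comp_def] using this
  have habs : Tendsto (fun N : ℕ => |yN d N (μ N) - x|) atTop (nhds 0) := by
    have h0 : Tendsto (fun N : ℕ => yN d N (μ N) - x) atTop (nhds 0) := by
      simpa using hH'.sub_const x
    have := (continuous_abs.tendsto 0).comp h0
    simpa [Function.comp_def] using this
  have hB : Tendsto (fun N : ℕ => 4 * Real.sqrt (EE d N (μ N)) + |yN d N (μ N) - x|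
      + 2/(N:ℝ)) atTop (nhds 0) := by
    have := ((hs.const_mul 4).add habs).add h2N
    simpa using this
  refine squeeze_zero' (Filter.Eventually.of_forall fun N =>
    Real.iSup_nonneg fun t => abs_nonneg _) ?_ hB
  filter_upwards [eventually_ge_atTop 1] with N hN
  refine ciSup_le fun t => ?_
  exact (perN_main d N hd hN (μ N) (hμ N)).2.2.2 x hx t t.2

lemma neural_quarter (d : ℕ) (hd : 2 ≤ d) (μ : (N : ℕ) → (Fin N → Fin d) → ℝ)
    (hI2 : Tendsto (fun N : ℕ => neural (μ N) / N) atTop (nhds (Real.log d / 4))) :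
    Tendsto (fun N : ℕ => neural (μ N) / ((N:ℝ) * Real.log d)) atTop (nhds (1/4)) := by
  have hlog : (0:ℝ) < Real.log d := Real.log_pos (by exact_mod_cast hd)
  have h := hI2.div_const (Real.log d)
  have he : Real.log d/4/Real.log d = 1/4 := by
    field_simp
  rw [he] at h
  simpa [div_div] using h

lemma part2_half (d : ℕ) (hd : 2 ≤ d) (μ : (N : ℕ) → (Fin N → Fin d) → ℝ)
    (hμ : ∀ N, IsPMF (μ N))
    (hI2 : Tendsto (fun N : ℕ => neural (μ N) / N) atTop (nhds (Real.log d / 4))) :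
    Tendsto (fun N : ℕ => entropy (μ N) / (N * Real.log d)) atTop (nhds (1/2)) := by
  have hI' := neural_quarter d hd μ hI2
  have hy2 : ∀ᶠ N : ℕ in atTop, ‖yN d N (μ N) - 1/2‖
      ≤ Real.sqrt (1/4 - neural (μ N)/((N:ℝ)*Real.log d) + 4/(N:ℝ)) := by
    filter_upwards [eventually_ge_atTop 1] with N hN
    obtain ⟨⟨hy0, hy1⟩, -, hIneq, -⟩ := perN_main d N hd hN (μ N) (hμ N)
    rw [Real.norm_eq_abs]
    refine Real.abs_le_sqrt ?_
    have hsq : (yN d N (μ N) - 1/2)^2 = 1/4 - (yN d N (μ N) - (yN d N (μ N))^2) := by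
      ring
    linarith only [hIneq, hsq.le, hsq.ge]
  have hRlim : Tendsto (fun N : ℕ =>
      Real.sqrt (1/4 - neural (μ N)/((N:ℝ)*Real.log d) + 4/(N:ℝ))) atTop (nhds 0) := by
    have hR : Tendsto (fun N : ℕ => 1/4 - neural (μ N)/((N:ℝ)*Real.log d) + 4/(N:ℝ))
        atTop (nhds 0) := by
      have := ((tendsto_const_nhds (x := (1/4:ℝ)) (f := atTop)).sub hI').add
        (tendsto_const_div_atTop 4)
      simpa using this
    have := (Real.continuous_sqrt.tendsto 0).comp hR
    simpa [Function.comp_def] using this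
  have hf : Tendsto (fun N : ℕ => yN d N (μ N) - 1/2) atTop (nhds 0) :=
    squeeze_zero_norm' hy2 hRlim
  have hfin := hf.add_const (1/2)
  norm_num at hfin
  exact hfin
end assembly

theorem stmt3' (d : ℕ) (hd : 2 ≤ d) :
    (∀ x ∈ Set.Icc (0:ℝ) 1, ∀ μ : (N : ℕ) → (Fin N → Fin d) → ℝ, (∀ N, IsPMF (μ N)) →
      Tendsto (fun N : ℕ => entropy (μ N) / (N * Real.log d)) atTop (nhds x) →
      Tendsto (fun N : ℕ => neural (μ N) / (N * Real.log d)) atTop (nhds (x * (1 - x))) →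
      Tendsto (fun N : ℕ => ⨆ t : Set.Icc (0:ℝ) 1, |profile (μ N) t - min x t|)
        atTop (nhds 0)) ∧
    (∀ μ : (N : ℕ) → (Fin N → Fin d) → ℝ, (∀ N, IsPMF (μ N)) →
      Tendsto (fun N : ℕ => neural (μ N) / N) atTop (nhds (Real.log d / 4)) →
      (Tendsto (fun N : ℕ => entropy (μ N) / (N * Real.log d)) atTop (nhds (1/2)) ∧
       Tendsto (fun N : ℕ => ⨆ t : Set.Icc (0:ℝ) 1, |profile (μ N) t - min (1/2 : ℝ) t|)
         atTop (nhds 0))) := by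
  constructor
  · exact fun x hx μ hμ hH hI => part1_main d hd x hx μ hμ hH hI
  · intro μ hμ hI2
    have hhalf := part2_half d hd μ hμ hI2
    refine ⟨hhalf, ?_⟩
    have hI4 : Tendsto (fun N : ℕ => neural (μ N) / ((N:ℝ) * Real.log d)) atTop
        (nhds ((1/2) * (1 - 1/2))) := by
      have := neural_quarter d hd μ hI2
      norm_num at this ⊢
      exact this
    exact part1_main d hd (1/2) (by norm_num) μ hμ hhalf hI4

/-- For `d ≥ 2` and `x ∈ [0,1]`, any approximate `x`-maximizer `μ^N ∈ M(d,N)`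
for the neural complexity satisfies `sup_{t∈[0,1]} |h_{μ^N}(t) − h*_x(t)| → 0`.
In particular any sequence with `I(μ^N)/N → (log d)/4` satisfies
`H(μ^N)/(N log d) → 1/2` and `sup_{t∈[0,1]} |h_{μ^N}(t) − h*_{1/2}(t)| → 0`. -/
theorem stmt3 (d : ℕ) (hd : 2 ≤ d) :
    (∀ x ∈ Set.Icc (0:ℝ) 1, ∀ μ : (N : ℕ) → (Fin N → Fin d) → ℝ, (∀ N, IsPMF (μ N)) →
      Tendsto (fun N : ℕ => entropy (μ N) / (N * Real.log d)) atTop (nhds x) →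
      Tendsto (fun N : ℕ => neural (μ N) / (N * Real.log d)) atTop (nhds (x * (1 - x))) →
      Tendsto (fun N : ℕ => ⨆ t : Set.Icc (0:ℝ) 1, |profile (μ N) t - min x t|)
        atTop (nhds 0)) ∧
    (∀ μ : (N : ℕ) → (Fin N → Fin d) → ℝ, (∀ N, IsPMF (μ N)) →
      Tendsto (fun N : ℕ => neural (μ N) / N) atTop (nhds (Real.log d / 4)) →
      (Tendsto (fun N : ℕ => entropy (μ N) / (N * Real.log d)) atTop (nhds (1/2)) ∧
       Tendsto (fun N : ℕ => ⨆ t : Set.Icc (0:ℝ) 1, |profile (μ N) t - min (1/2 : ℝ) t|)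
         atTop (nhds 0))) := stmt3' d hd
end
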